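/- arXiv:1912.11845 — 5 statements merged into one kernel-verified Lean document; each statement's English description precedes it below -/
import Mathlib

section
/- For n ≥ 0 let ν_n ∈ ℚ[y] be the coefficient of xⁿ in c·(1 + y·x·c³)⁻¹ ∈ (ℚ[y])[[x]] (the moment polynomials μ_n^{(1)}(y), i.e. the row polynomials of the Riordan involution (c, -x·c³)). Then the Hankel transform det(ν_{i+j})_{0≤i,j≤n} equals ∑_{k=0}^{n} (-1)^k·C(2n+1-k, 2n+1-2k)·y^k in ℚ[y], where C denotes the binomial coefficient. -/
open PowerSeries Finset

namespace Stmt14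

noncomputable section

local notation "Y" => (Polynomial.X : Polynomial ℚ)

def pq (n : ℕ) : Polynomial ℚ :=
  ∑ k ∈ Finset.range (n + 1),
    Polynomial.C ((-1 : ℚ) ^ k * ((2 * n + 1 - k).choose k : ℚ)) * Polynomial.X ^ k

lemma pq_eq_stmt (n : ℕ) :
    (∑ k ∈ Finset.range (n + 1),
      Polynomial.C ((-1 : ℚ) ^ k * ((2 * n + 1 - k).choose (2 * n + 1 - 2 * k) : ℚ)) *
        Polynomial.X ^ k) = pq n := by
  unfold pq
  refine Finset.sum_congr rfl fun k hk => ?_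
  have hk' : k ≤ n := by simpa [Nat.lt_succ_iff] using Finset.mem_range.mp hk
  have h1 : 2 * n + 1 - 2 * k = (2 * n + 1 - k) - k := by omega
  rw [h1, Nat.choose_symm (by omega)]

lemma coeff_pq (n m : ℕ) :
    (pq n).coeff m = if m ≤ n then (-1 : ℚ) ^ m * ((2 * n + 1 - m).choose m : ℚ) else 0 := by
  unfold pq
  rw [Polynomial.finset_sum_coeff]
  simp only [Polynomial.coeff_C_mul, Polynomial.coeff_X_pow]
  split_ifs with h
  · rw [Finset.sum_eq_single m]
    · simp
    · intro k _ hk; simp [Ne.symm hk]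
    · intro hm; exact absurd (Finset.mem_range.mpr (by omega)) hm
  · refine Finset.sum_eq_zero fun k hk => ?_
    have : m ≠ k := by have := Finset.mem_range.mp hk; omega
    simp [this]

lemma pq_zero : pq 0 = 1 := by
  simp [pq]

lemma pq_one : pq 1 = 1 - 2 * Y := by
  apply Polynomial.ext
  intro m
  rw [coeff_pq]
  match m with
  | 0 => norm_num
  | 1 => norm_num [Polynomial.coeff_ofNat_mul, Polynomial.coeff_one]
  | (m + 2) =>
    simp only [Polynomial.coeff_sub, Polynomial.coeff_one, Polynomial.coeff_ofNat_mul,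
      Polynomial.coeff_X]
    norm_num [Nat.succ_ne_zero]

lemma choose_key (M k : ℕ) :
    (M + 2).choose (k + 2) + M.choose k = M.choose (k + 2) + 2 * (M + 1).choose (k + 1) := by
  have h1 : (M + 2).choose (k + 2) = (M + 1).choose (k + 1) + (M + 1).choose (k + 2) :=
    Nat.choose_succ_succ _ _
  have h2 : (M + 1).choose (k + 2) = M.choose (k + 1) + M.choose (k + 2) :=
    Nat.choose_succ_succ _ _
  have h3 : (M + 1).choose (k + 1) = M.choose k + M.choose (k + 1) :=
    Nat.choose_succ_succ _ _
  omega

lemma pq_rec (n : ℕ) : pq (n + 2) = (1 - 2 * Y) * pq (n + 1) - Y ^ 2 * pq n := by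
  have hexp : (1 - 2 * Y) * pq (n + 1) - Y ^ 2 * pq n
      = pq (n + 1) - 2 * (Y * pq (n + 1)) - Y ^ 2 * pq n := by ring
  rw [hexp]
  apply Polynomial.ext
  intro m
  match m with
  | 0 =>
    simp [Polynomial.mul_coeff_zero, coeff_pq, Polynomial.coeff_ofNat_mul]
  | 1 =>
    have h1 : (Y * pq (n + 1)).coeff 1 = (pq (n + 1)).coeff 0 := Polynomial.coeff_X_mul _ 0
    have h2 : (Y ^ 2 * pq n).coeff 1 = 0 := by
      rw [pow_two, mul_assoc]
      have : (Y * (Y * pq n)).coeff 1 = (Y * pq n).coeff 0 := Polynomial.coeff_X_mul _ 0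
      simp [this, Polynomial.mul_coeff_zero]
    simp only [Polynomial.coeff_sub, Polynomial.coeff_ofNat_mul, h1, h2, coeff_pq]
    norm_num
    ring
  | (m + 2) =>
    have h1 : (Y * pq (n + 1)).coeff (m + 2) = (pq (n + 1)).coeff (m + 1) :=
      Polynomial.coeff_X_mul _ (m + 1)
    have h2 : (Y ^ 2 * pq n).coeff (m + 2) = (pq n).coeff m := by
      rw [pow_two, mul_assoc]
      rw [show m + 2 = (m + 1) + 1 from rfl, Polynomial.coeff_X_mul, Polynomial.coeff_X_mul]
    simp only [Polynomial.coeff_sub, Polynomial.coeff_ofNat_mul, h1, h2, coeff_pq]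
    by_cases hm : m ≤ n
    · have c1 : m + 2 ≤ n + 2 := by omega
      have c2 : m + 1 ≤ n + 1 := by omega
      rw [if_pos c1, if_pos c2, if_pos hm]
      have e1 : 2 * (n + 2) + 1 - (m + 2) = (2 * n + 1 - m) + 2 := by omega
      have e2 : 2 * (n + 1) + 1 - (m + 1) = (2 * n + 1 - m) + 1 := by omega
      rw [e1, e2]
      by_cases hm2 : m + 2 ≤ n + 1
      · rw [if_pos hm2]
        have e3 : 2 * (n + 1) + 1 - (m + 2) = (2 * n + 1 - m) := by omega
        rw [e3]
        have key := choose_key (2 * n + 1 - m) m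
        have keyQ : ((((2 * n + 1 - m) + 2).choose (m + 2) : ℚ))
            = ((2 * n + 1 - m).choose (m + 2) : ℚ) + 2 * (((2 * n + 1 - m) + 1).choose (m + 1) : ℚ)
              - ((2 * n + 1 - m).choose m : ℚ) := by
          have := congrArg (fun t : ℕ => (t : ℚ)) key
          push_cast at this
          linarith
        rw [keyQ]
        ring
      · rw [if_neg hm2]
        have hmn : m = n := by omega
        subst hmn
        have hz : (2 * m + 1 - m).choose (m + 2) = 0 := by
          apply Nat.choose_eq_zero_of_lt; omega
        have key := choose_key (2 * m + 1 - m) m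
        rw [hz] at key
        have keyQ : ((((2 * m + 1 - m) + 2).choose (m + 2) : ℚ))
            = 2 * (((2 * m + 1 - m) + 1).choose (m + 1) : ℚ) - ((2 * m + 1 - m).choose m : ℚ) := by
          have := congrArg (fun t : ℕ => (t : ℚ)) key
          push_cast at this
          linarith
        rw [keyQ]
        ring
    · rw [if_neg (by omega), if_neg (by omega), if_neg (by omega), if_neg hm]
      ring

lemma pq_two : pq 2 = 1 - 4 * Y + 3 * Y ^ 2 := by
  rw [pq_rec 0, pq_one, pq_zero]
  ring


/-- `bhat n` represents the recurrence coefficient `β̂_{n+2}`. -/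
def bhat (n : ℕ) : Polynomial ℚ :=
  2 * pq (n + 1) * pq (n + 2) + Y * (pq (n + 2) * pq n - pq (n + 1) ^ 2)

def kk : ℕ → Polynomial ℚ
  | 0 => 1
  | 1 => 1
  | (n + 2) => pq n ^ 2 * kk (n + 1)

def R1 : Polynomial (Polynomial ℚ) := 1 + Polynomial.C (Y - 1) * Polynomial.X

def R2 : Polynomial (Polynomial ℚ) :=
  Polynomial.C (1 - 2 * Y) + Polynomial.C (8 * Y - 2 * Y ^ 2 - 3) * Polynomial.X
    + Polynomial.C (1 - 3 * Y + Y ^ 2) * Polynomial.X ^ 2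

def D1 : Polynomial (Polynomial ℚ) := 1

def D2 : Polynomial (Polynomial ℚ) :=
  Polynomial.C (1 - 2 * Y) + Polynomial.C (5 * Y - 2) * Polynomial.X

/-- one step of the three-term recurrence, producing the term of index `i+3`
from those of index `i+1` (prev) and `i+2` (cur). -/
def stepR (i : ℕ) (prev cur : Polynomial (Polynomial ℚ)) : Polynomial (Polynomial ℚ) :=
  (Polynomial.C (pq (i + 2) * pq (i + 1)) - Polynomial.C (bhat i) * Polynomial.X) * cur
    - Polynomial.C (pq (i + 2) ^ 2 * pq i ^ 2) * Polynomial.X ^ 2 * prev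

def seq2 (a b : Polynomial (Polynomial ℚ)) : ℕ → Polynomial (Polynomial ℚ) × Polynomial (Polynomial ℚ)
  | 0 => (a, b)
  | (i + 1) => ((seq2 a b i).2, stepR i (seq2 a b i).1 (seq2 a b i).2)

def Rt : ℕ → Polynomial (Polynomial ℚ)
  | 0 => 1
  | (i + 1) => (seq2 R1 R2 i).1

def Dt : ℕ → Polynomial (Polynomial ℚ)
  | 0 => 0
  | (i + 1) => (seq2 D1 D2 i).1

lemma Rt_one : Rt 1 = R1 := rfl
lemma Rt_two : Rt 2 = R2 := rfl
lemma Dt_one : Dt 1 = D1 := rfl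
lemma Dt_two : Dt 2 = D2 := rfl

lemma seq2_snd (a b : Polynomial (Polynomial ℚ)) (i : ℕ) :
    (seq2 a b i).2 = (seq2 a b (i + 1)).1 := rfl

lemma Rt_rec (i : ℕ) : Rt (i + 3) = stepR i (Rt (i + 1)) (Rt (i + 2)) := by
  show (seq2 R1 R2 (i + 2)).1 = _
  rw [show (seq2 R1 R2 (i + 2)).1 = (seq2 R1 R2 (i + 1)).2 from rfl]
  rw [show (seq2 R1 R2 (i + 1)).2 = stepR i (seq2 R1 R2 i).1 (seq2 R1 R2 i).2 from rfl]
  rw [seq2_snd]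
  rfl

lemma Dt_rec (i : ℕ) : Dt (i + 3) = stepR i (Dt (i + 1)) (Dt (i + 2)) := by
  show (seq2 D1 D2 (i + 2)).1 = _
  rw [show (seq2 D1 D2 (i + 2)).1 = (seq2 D1 D2 (i + 1)).2 from rfl]
  rw [show (seq2 D1 D2 (i + 1)).2 = stepR i (seq2 D1 D2 i).1 (seq2 D1 D2 i).2 from rfl]
  rw [seq2_snd]
  rfl


lemma deg_CX (a : Polynomial ℚ) :
    (Polynomial.C a * Polynomial.X : Polynomial (Polynomial ℚ)).natDegree ≤ 1 :=
  le_trans (Polynomial.natDegree_C_mul_le _ _) (le_of_eq Polynomial.natDegree_X)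

lemma deg_CX2 (a : Polynomial ℚ) :
    (Polynomial.C a * Polynomial.X ^ 2 : Polynomial (Polynomial ℚ)).natDegree ≤ 2 :=
  le_trans (Polynomial.natDegree_C_mul_le _ _) (le_of_eq (Polynomial.natDegree_X_pow 2))

lemma deg_lin (a b : Polynomial ℚ) :
    (Polynomial.C a - Polynomial.C b * Polynomial.X : Polynomial (Polynomial ℚ)).natDegree ≤ 1 :=
  le_trans (Polynomial.natDegree_sub_le _ _)
    (max_le (le_trans (Polynomial.natDegree_C _).le (by omega)) (deg_CX b))

lemma natDegree_stepR (i d : ℕ) (prev cur : Polynomial (Polynomial ℚ))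
    (hp : prev.natDegree ≤ d + 1) (hc : cur.natDegree ≤ d + 2) :
    (stepR i prev cur).natDegree ≤ d + 3 := by
  unfold stepR
  apply le_trans (Polynomial.natDegree_sub_le _ _)
  apply max_le
  · exact le_trans Polynomial.natDegree_mul_le (by have := deg_lin (pq (i+2) * pq (i+1)) (bhat i); omega)
  · exact le_trans Polynomial.natDegree_mul_le (by have := deg_CX2 (pq (i+2) ^ 2 * pq i ^ 2); omega)

lemma natDegree_R1 : R1.natDegree ≤ 1 := by
  unfold R1
  exact le_trans (Polynomial.natDegree_add_le _ _)
    (max_le (by simp) (deg_CX _))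

lemma natDegree_R2 : R2.natDegree ≤ 2 := by
  unfold R2
  apply le_trans (Polynomial.natDegree_add_le _ _)
  apply max_le
  · apply le_trans (Polynomial.natDegree_add_le _ _)
    exact max_le (le_trans (Polynomial.natDegree_C _).le (by omega)) (le_trans (deg_CX _) (by omega))
  · exact deg_CX2 _

lemma natDegree_D2 : D2.natDegree ≤ 1 := by
  unfold D2
  exact le_trans (Polynomial.natDegree_add_le _ _)
    (max_le (le_trans (Polynomial.natDegree_C _).le (by omega)) (deg_CX _))

lemma natDegree_Rt : ∀ i, (Rt (i + 1)).natDegree ≤ i + 1 ∧ (Rt (i + 2)).natDegree ≤ i + 2 := by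
  intro i
  induction i with
  | zero => exact ⟨by rw [Rt_one]; exact natDegree_R1, by rw [Rt_two]; exact natDegree_R2⟩
  | succ n ih =>
    refine ⟨ih.2, ?_⟩
    rw [Rt_rec n]
    exact natDegree_stepR n n _ _ ih.1 ih.2

lemma natDegree_Dt : ∀ i, (Dt (i + 1)).natDegree ≤ i ∧ (Dt (i + 2)).natDegree ≤ i + 1 := by
  intro i
  induction i with
  | zero => exact ⟨by rw [Dt_one]; simp [D1], by rw [Dt_two]; exact natDegree_D2⟩
  | succ n ih =>
    refine ⟨ih.2, ?_⟩
    rw [Dt_rec n]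
    unfold stepR
    apply le_trans (Polynomial.natDegree_sub_le _ _)
    apply max_le
    · refine le_trans Polynomial.natDegree_mul_le ?_
      have h1 := deg_lin (pq (n + 2) * pq (n + 1)) (bhat n)
      have := ih.2
      omega
    · refine le_trans Polynomial.natDegree_mul_le ?_
      have h2 := deg_CX2 (pq (n + 2) ^ 2 * pq n ^ 2)
      have := ih.1
      omega

lemma coeff0_lin (a b : Polynomial ℚ) :
    (Polynomial.C a - Polynomial.C b * Polynomial.X : Polynomial (Polynomial ℚ)).coeff 0 = a := by
  simp [Polynomial.coeff_sub, Polynomial.mul_coeff_zero]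

lemma kk_step (n : ℕ) : kk (n + 2) = pq n ^ 2 * kk (n + 1) := rfl

lemma coeff0_Rt : ∀ i, (Rt (i + 1)).coeff 0 = kk (i + 1) * pq i
    ∧ (Rt (i + 2)).coeff 0 = kk (i + 2) * pq (i + 1) := by
  intro i
  induction i with
  | zero =>
    constructor
    · rw [Rt_one]
      simp [R1, kk, pq_zero, Polynomial.coeff_one, Polynomial.mul_coeff_zero]
    · rw [Rt_two]
      rw [kk_step, show kk 1 = 1 from rfl, pq_zero, pq_one]
      simp [R2, Polynomial.coeff_add, Polynomial.mul_coeff_zero]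
  | succ n ih =>
    refine ⟨ih.2, ?_⟩
    rw [Rt_rec n]
    unfold stepR
    rw [Polynomial.coeff_sub, Polynomial.mul_coeff_zero, Polynomial.mul_coeff_zero,
      coeff0_lin, ih.2]
    rw [kk_step (n + 1), Polynomial.mul_coeff_zero]
    simp only [Polynomial.coeff_X_pow, Polynomial.mul_coeff_zero]
    norm_num
    ring

lemma coeff0_Dt1 : (Dt 1).coeff 0 = 1 := by rw [Dt_one]; simp [D1]


section Series

local notation "CS" => (PowerSeries.C : Polynomial ℚ →+* PowerSeries (Polynomial ℚ))
local notation "XS" => (PowerSeries.X : PowerSeries (Polynomial ℚ))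

lemma coe_ofNatP (m : ℕ) [m.AtLeastTwo] :
    ((OfNat.ofNat m : Polynomial (Polynomial ℚ)) : PowerSeries (Polynomial ℚ)) = OfNat.ofNat m := by
  rw [← Polynomial.coeToPowerSeries.ringHom_apply, map_ofNat]

variable (c : PowerSeries (Polynomial ℚ))

lemma G3 (hc : c = 1 + PowerSeries.X * c ^ 2) (n : ℕ) :
    CS (pq (n+1)) ^ 2 * XS ^ 2 * c ^ 4 * (CS (pq (n+3)) - CS Y * CS (pq (n+2)) * XS * c ^ 2)
      = (CS (pq (n+2)) * CS (pq (n+1))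
          - (2 * CS (pq (n+1)) * CS (pq (n+2))
              + CS Y * (CS (pq (n+2)) * CS (pq n) - CS (pq (n+1)) ^ 2)) * XS) * c ^ 2
          * (CS (pq (n+2)) - CS Y * CS (pq (n+1)) * XS * c ^ 2)
        - CS (pq (n+2)) ^ 2 * (CS (pq (n+1)) - CS Y * CS (pq n) * XS * c ^ 2) := by
  rw [pq_rec (n+1), pq_rec n]
  simp only [map_sub, map_mul, map_one, map_pow, map_ofNat]
  set a := CS (pq n)
  set b := CS (pq (n+1))
  set y := CS Y
  linear_combination ((1 + c) * (-b^3 + 4*y*b^3 - 4*y^2*b^3 + 2*y^2*a*b^2 - 4*y^3*a*b^2 - y^4*a^2*b)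
    + XS*c^2 * (-b^3 + 5*y*b^3 - 6*y^2*b^3 + 2*y^2*a*b^2 - 5*y^3*a*b^2 - y^4*a^2*b)
    + (XS*c^3 + XS^2*c^4) * (y*b^3 - 2*y^2*b^3 - y^3*a*b^2)) * hc

lemma Jlem (hc : c = 1 + PowerSeries.X * c ^ 2) : ∀ i : ℕ, ((Rt (i+1) : Polynomial (Polynomial ℚ)) : PowerSeries (Polynomial ℚ)) * c
    = ((Dt (i+1) : Polynomial (Polynomial ℚ)) : PowerSeries (Polynomial ℚ)) * (1 + CS Y * XS * c ^ 3)
      + CS (kk (i+1)) * XS ^ (2*i+2) * c ^ (2*i+3)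
        * (CS (pq (i+1)) - CS Y * CS (pq i) * XS * c ^ 2) := by
  have base0 : ((Rt 1 : Polynomial (Polynomial ℚ)) : PowerSeries (Polynomial ℚ)) * c
      = ((Dt 1 : Polynomial (Polynomial ℚ)) : PowerSeries (Polynomial ℚ)) * (1 + CS Y * XS * c ^ 3)
        + CS (kk 1) * XS ^ 2 * c ^ 3 * (CS (pq 1) - CS Y * CS (pq 0) * XS * c ^ 2) := by
    rw [Rt_one, Dt_one]
    unfold R1 D1
    rw [show kk 1 = 1 from rfl, pq_one, pq_zero]
    simp only [Polynomial.coe_add, Polynomial.coe_sub, Polynomial.coe_mul, Polynomial.coe_pow,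
      Polynomial.coe_C, Polynomial.coe_X, Polynomial.coe_one]
    simp only [map_sub, map_add, map_mul, map_one, map_pow, map_ofNat]
    set y := CS Y
    linear_combination (1 + XS*c - y*XS*c - y*XS*c^2 - y*XS^2*c^3) * hc
  have base1 : ((Rt 2 : Polynomial (Polynomial ℚ)) : PowerSeries (Polynomial ℚ)) * c
      = ((Dt 2 : Polynomial (Polynomial ℚ)) : PowerSeries (Polynomial ℚ)) * (1 + CS Y * XS * c ^ 3)
        + CS (kk 2) * XS ^ 4 * c ^ 5 * (CS (pq 2) - CS Y * CS (pq 1) * XS * c ^ 2) := by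
    rw [Rt_two, Dt_two]
    unfold R2 D2
    rw [show kk 2 = 1 by rw [kk_step, pq_zero, show kk 1 = 1 from rfl]; ring, pq_one, pq_two]
    simp only [Polynomial.coe_add, Polynomial.coe_sub, Polynomial.coe_mul, Polynomial.coe_pow,
      Polynomial.coe_C, Polynomial.coe_X, Polynomial.coe_one]
    simp only [map_sub, map_add, map_mul, map_one, map_pow, map_ofNat]
    set y := CS Y
    linear_combination (1 - 2*y - 2*XS + 5*XS*y + XS*c - 3*XS*c*y + 2*XS*c*y^2 - XS*c^2*y
      + 2*XS*c^2*y^2 - XS^2*c + 3*XS^2*c*y - XS^2*c*y^2 + XS^2*c^2 - 2*XS^2*c^2*y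
      - XS^2*c^2*y^2 - XS^2*c^3*y + 2*XS^2*c^3*y^2 + XS^3*c^3 - 3*XS^3*c^3*y + XS^3*c^3*y^2
      - XS^3*c^4*y + 2*XS^3*c^4*y^2 - XS^4*c^5*y + 2*XS^4*c^5*y^2) * hc
  intro i
  induction i using Nat.twoStepInduction with
  | zero => exact base0
  | one => exact base1
  | more n ih1 ih2 =>
    have hrec := Rt_rec n
    have hdrec := Dt_rec n
    rw [show n + 2 + 1 = n + 3 from rfl] at *
    rw [hrec, hdrec]
    unfold stepR bhat
    rw [show kk (n+3) = pq (n+1)^2 * (pq n ^2 * kk (n+1)) by rw [kk_step (n+1), kk_step n]]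
    rw [show kk (n+2) = pq n ^2 * kk (n+1) from kk_step n] at ih2
    rw [show n + 1 + 1 = n + 2 from rfl] at ih2
    simp only [Polynomial.coe_add, Polynomial.coe_sub, Polynomial.coe_mul, Polynomial.coe_pow,
      Polynomial.coe_C, Polynomial.coe_X, Polynomial.coe_one] at ih1 ih2 ⊢
    simp only [map_sub, map_add, map_mul, map_one, map_pow, map_ofNat] at ih1 ih2 ⊢
    have g3 := G3 c hc n
    have H2 := congrArg (PowerSeries.C : Polynomial ℚ →+* PowerSeries (Polynomial ℚ)) (pq_rec n)
    have H3 := congrArg (PowerSeries.C : Polynomial ℚ →+* PowerSeries (Polynomial ℚ)) (pq_rec (n+1))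
    simp only [map_sub, map_mul, map_one, map_pow, map_ofNat] at H2 H3
    set a := CS (pq n)
    set b := CS (pq (n+1))
    set d := CS (pq (n+2))
    set e := CS (pq (n+3))
    set y := CS Y
    set K := CS (kk (n+1))
    linear_combination (d * b - (2*b*d + y*(d*a - b^2)) * XS) * ih2
      - d^2 * a^2 * XS^2 * ih1
      + K * a^2 * XS^(2*n+4) * c^(2*n+3) * g3
      - 2*K*a^2*b^2*XS^(2*n+6)*c^(2*n+7) * H3
      + 2*K*a^2*XS^(2*n+4)*c^(2*n) * (-c^3*(b*d + b^2 - 2*y*b^2 - y^2*a*b)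
          + c^5*(b*d + b^2 - 2*y*b^2 - y^2*a*b) - 2*XS*c^5*(b*d + b^2) + 5*XS*c^5*y*b^2
          + 2*XS*c^5*y^2*a*b - XS*c^7*y*b^2 + XS^2*c^7*(-b^2 + 4*y*b^2 + y^2*a*b)
          + XS^3*c^9*y*b^2) * H2
      - 2*K*a^2*XS^(2*n+4)*c^(2*n+3) * ((1 + c) * (-b^3 + 4*y*b^3 - 4*y^2*b^3 + 2*y^2*a*b^2
            - 4*y^3*a*b^2 - y^4*a^2*b)
          + XS*c^2 * (-b^3 + 5*y*b^3 - 6*y^2*b^3 + 2*y^2*a*b^2 - 5*y^3*a*b^2 - y^4*a^2*b)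
          + (XS*c^3 + XS^2*c^4) * (y*b^3 - 2*y^2*b^3 - y^3*a*b^2)) * hc

lemma degRt (j : ℕ) : (Rt j).natDegree ≤ j := by
  cases j with
  | zero => simp [Rt]
  | succ m => exact (natDegree_Rt m).1

lemma u_const (u : PowerSeries (Polynomial ℚ))
    (hu : (1 + CS Y * XS * c ^ 3) * u = 1) :
    PowerSeries.constantCoeff u = 1 := by
  have := congrArg (PowerSeries.constantCoeff) hu
  simp only [map_mul, map_add, map_one, PowerSeries.constantCoeff_X,
    PowerSeries.constantCoeff_C, map_pow] at this
  simpa using this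

lemma Rt_g (u : PowerSeries (Polynomial ℚ)) (hc : c = 1 + PowerSeries.X * c ^ 2)
    (hu : (1 + CS Y * XS * c ^ 3) * u = 1) (i : ℕ) :
    ((Rt (i+1) : Polynomial (Polynomial ℚ)) : PowerSeries (Polynomial ℚ)) * (c * u)
      = ((Dt (i+1) : Polynomial (Polynomial ℚ)) : PowerSeries (Polynomial ℚ))
        + XS ^ (2*i+2) * (CS (kk (i+1)) * c ^ (2*i+3)
            * (CS (pq (i+1)) - CS Y * CS (pq i) * XS * c ^ 2) * u) := by
  linear_combination u * (Jlem c hc i)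
    + ((Dt (i+1) : Polynomial (Polynomial ℚ)) : PowerSeries (Polynomial ℚ)) * hu

lemma coeff_RtRt (u : PowerSeries (Polynomial ℚ))
    (hc0 : PowerSeries.constantCoeff c = 1)
    (hc : c = 1 + PowerSeries.X * c ^ 2)
    (hu : (1 + CS Y * XS * c ^ 3) * u = 1) (i j : ℕ) (hj : j ≤ i + 1) :
    (PowerSeries.coeff ((i+1) + j))
        (((Rt (i+1) : Polynomial (Polynomial ℚ)) : PowerSeries (Polynomial ℚ))
          * ((Rt j : Polynomial (Polynomial ℚ)) : PowerSeries (Polynomial ℚ)) * (c * u))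
      = if j = i + 1 then kk (i+1) ^ 2 * pq i * pq (i+1) else 0 := by
  have hg := Rt_g c u hc hu i
  rw [show ((Rt (i+1) : Polynomial (Polynomial ℚ)) : PowerSeries (Polynomial ℚ))
      * ((Rt j : Polynomial (Polynomial ℚ)) : PowerSeries (Polynomial ℚ)) * (c * u)
    = ((Rt j : Polynomial (Polynomial ℚ)) : PowerSeries (Polynomial ℚ))
      * (((Rt (i+1) : Polynomial (Polynomial ℚ)) : PowerSeries (Polynomial ℚ)) * (c * u)) by ring,
    hg, mul_add, map_add]
  have hD : (PowerSeries.coeff ((i+1) + j))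
      (((Rt j : Polynomial (Polynomial ℚ)) : PowerSeries (Polynomial ℚ))
        * ((Dt (i+1) : Polynomial (Polynomial ℚ)) : PowerSeries (Polynomial ℚ))) = 0 := by
    rw [← Polynomial.coe_mul, Polynomial.coeff_coe]
    apply Polynomial.coeff_eq_zero_of_natDegree_lt
    have h1 := degRt j
    have h2 := (natDegree_Dt i).1
    have := Polynomial.natDegree_mul_le (p := Rt j) (q := Dt (i+1))
    omega
  rw [hD, zero_add]
  rw [show ((Rt j : Polynomial (Polynomial ℚ)) : PowerSeries (Polynomial ℚ))
      * (XS ^ (2*i+2) * (CS (kk (i+1)) * c ^ (2*i+3)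
          * (CS (pq (i+1)) - CS Y * CS (pq i) * XS * c ^ 2) * u))
    = XS ^ (2*i+2) * (((Rt j : Polynomial (Polynomial ℚ)) : PowerSeries (Polynomial ℚ))
        * (CS (kk (i+1)) * c ^ (2*i+3)
          * (CS (pq (i+1)) - CS Y * CS (pq i) * XS * c ^ 2) * u)) by ring]
  by_cases hje : j = i + 1
  · subst hje
    rw [if_pos rfl]
    rw [show (i+1) + (i+1) = 0 + (2*i+2) by ring, PowerSeries.coeff_X_pow_mul]
    rw [PowerSeries.coeff_zero_eq_constantCoeff, map_mul]
    rw [Polynomial.constantCoeff_coe]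
    simp only [map_mul, map_sub, map_pow, hc0, PowerSeries.constantCoeff_C,
      PowerSeries.constantCoeff_X, u_const c u hu]
    rw [(coeff0_Rt i).1]
    ring
  · rw [if_neg hje]
    rw [PowerSeries.coeff_X_pow_mul']
    rw [if_neg (by omega)]

lemma coeff_Rt00 (u : PowerSeries (Polynomial ℚ))
    (hc0 : PowerSeries.constantCoeff c = 1)
    (hu : (1 + CS Y * XS * c ^ 3) * u = 1) :
    (PowerSeries.coeff 0)
        (((Rt 0 : Polynomial (Polynomial ℚ)) : PowerSeries (Polynomial ℚ))
          * ((Rt 0 : Polynomial (Polynomial ℚ)) : PowerSeries (Polynomial ℚ)) * (c * u)) = 1 := by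
  rw [show (Rt 0 : Polynomial (Polynomial ℚ)) = 1 from rfl]
  simp only [Polynomial.coe_one, one_mul, PowerSeries.coeff_zero_eq_constantCoeff, map_mul,
    hc0, u_const c u hu, mul_one]

end Series

section Entry

lemma coeff_mul_range (N : ℕ) (g h : PowerSeries (Polynomial ℚ)) :
    PowerSeries.coeff N (g * h)
      = ∑ s ∈ Finset.range (N+1), PowerSeries.coeff s g
          * PowerSeries.coeff (N - s) h := by
  rw [PowerSeries.coeff_mul]
  exact Finset.Nat.sum_antidiagonal_eq_sum_range_succ
    (fun a b => PowerSeries.coeff a g * PowerSeries.coeff b h) N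

lemma entry_eq (p q : Polynomial (Polynomial ℚ)) (f : PowerSeries (Polynomial ℚ))
    (i j n : ℕ) (hi : i ≤ n) (hj : j ≤ n) (hp : p.natDegree ≤ i) (hq : q.natDegree ≤ j) :
    ∑ k ∈ Finset.range (n+1), ∑ l ∈ Finset.range (n+1),
      (if k ≤ i then p.coeff (i-k) else 0) * ((if l ≤ j then q.coeff (j-l) else 0)
        * (PowerSeries.coeff (k+l) f))
    = PowerSeries.coeff (i+j)
        ((p : PowerSeries (Polynomial ℚ)) * ((q : PowerSeries (Polynomial ℚ)) * f)) := by
  have key : ∀ (a : ℕ), a ≤ i → ∑ l ∈ Finset.range (j+1),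
      q.coeff (j-l) * PowerSeries.coeff ((i-a)+l) f
      = ∑ b ∈ Finset.range (j+1),
          q.coeff b * PowerSeries.coeff ((i-a)+(j-b)) f := by
    intro a _
    have := Finset.sum_range_reflect
      (fun b => q.coeff b * PowerSeries.coeff ((i-a)+(j-b)) f) (j+1)
    simp only [Nat.add_sub_cancel] at this
    rw [← this]
    apply Finset.sum_congr rfl
    intro l hl
    have hlj : l ≤ j := by have := Finset.mem_range.mp hl; omega
    rw [show (i-a) + (j - (j - l)) = (i-a) + l by omega]
  -- Step 1: restrict ranges
  have step1 : ∑ k ∈ Finset.range (n+1), ∑ l ∈ Finset.range (n+1),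
      (if k ≤ i then p.coeff (i-k) else 0) * ((if l ≤ j then q.coeff (j-l) else 0)
        * (PowerSeries.coeff (k+l) f))
      = ∑ k ∈ Finset.range (i+1), ∑ l ∈ Finset.range (j+1),
          p.coeff (i-k) * (q.coeff (j-l) * PowerSeries.coeff (k+l) f) := by
    rw [← Finset.sum_subset (Finset.range_subset_range.mpr (show i+1 ≤ n+1 by omega))
      (by intro k _ hk
          have : ¬ k ≤ i := fun h => hk (Finset.mem_range.mpr (by omega))
          simp [this])]
    apply Finset.sum_congr rfl
    intro k hk
    have hki : k ≤ i := by have := Finset.mem_range.mp hk; omega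
    rw [if_pos hki]
    rw [← Finset.sum_subset (Finset.range_subset_range.mpr (show j+1 ≤ n+1 by omega))
      (by intro l _ hl
          have : ¬ l ≤ j := fun h => hl (Finset.mem_range.mpr (by omega))
          simp [this])]
    apply Finset.sum_congr rfl
    intro l hl
    rw [if_pos (by have := Finset.mem_range.mp hl; omega)]
  -- Step 2: reflect
  have step2 : ∑ k ∈ Finset.range (i+1), ∑ l ∈ Finset.range (j+1),
      p.coeff (i-k) * (q.coeff (j-l) * PowerSeries.coeff (k+l) f)
      = ∑ a ∈ Finset.range (i+1), p.coeff a * ∑ b ∈ Finset.range (j+1),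
          q.coeff b * PowerSeries.coeff ((i-a)+(j-b)) f := by
    have houter := Finset.sum_range_reflect
      (fun a => p.coeff a * ∑ l ∈ Finset.range (j+1),
        q.coeff (j-l) * PowerSeries.coeff ((i-a)+l) f) (i+1)
    simp only [Nat.add_sub_cancel] at houter
    calc ∑ k ∈ Finset.range (i+1), ∑ l ∈ Finset.range (j+1),
          p.coeff (i-k) * (q.coeff (j-l) * PowerSeries.coeff (k+l) f)
        = ∑ k ∈ Finset.range (i+1), p.coeff (i-k) * ∑ l ∈ Finset.range (j+1),
            q.coeff (j-l) * PowerSeries.coeff ((i-(i-k))+l) f := by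
          apply Finset.sum_congr rfl
          intro k hk
          have hki : k ≤ i := by have := Finset.mem_range.mp hk; omega
          rw [Finset.mul_sum]
          apply Finset.sum_congr rfl
          intro l _
          rw [show i - (i - k) = k by omega]
      _ = ∑ a ∈ Finset.range (i+1), p.coeff a * ∑ l ∈ Finset.range (j+1),
            q.coeff (j-l) * PowerSeries.coeff ((i-a)+l) f := houter
      _ = ∑ a ∈ Finset.range (i+1), p.coeff a * ∑ b ∈ Finset.range (j+1),
            q.coeff b * PowerSeries.coeff ((i-a)+(j-b)) f := by
          apply Finset.sum_congr rfl
          intro a ha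
          rw [key a (by have := Finset.mem_range.mp ha; omega)]
  -- Step 3: expand RHS
  have step3 : PowerSeries.coeff (i+j)
      ((p : PowerSeries (Polynomial ℚ)) * ((q : PowerSeries (Polynomial ℚ)) * f))
      = ∑ a ∈ Finset.range (i+1), p.coeff a * ∑ b ∈ Finset.range (j+1),
          q.coeff b * PowerSeries.coeff ((i-a)+(j-b)) f := by
    rw [coeff_mul_range]
    rw [← Finset.sum_subset (Finset.range_subset_range.mpr (show i+1 ≤ i+j+1 by omega))
      (by intro a _ ha
          have : i < a := by
            by_contra h
            exact ha (Finset.mem_range.mpr (by omega))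
          rw [Polynomial.coeff_coe, Polynomial.coeff_eq_zero_of_natDegree_lt (by omega), zero_mul])]
    apply Finset.sum_congr rfl
    intro a ha
    have hai : a ≤ i := by have := Finset.mem_range.mp ha; omega
    rw [Polynomial.coeff_coe]
    congr 1
    rw [coeff_mul_range]
    rw [← Finset.sum_subset (Finset.range_subset_range.mpr (show j+1 ≤ i+j-a+1 by omega))
      (by intro b _ hb
          have : j < b := by
            by_contra h
            exact hb (Finset.mem_range.mpr (by omega))
          rw [Polynomial.coeff_coe, Polynomial.coeff_eq_zero_of_natDegree_lt (by omega), zero_mul])]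
    apply Finset.sum_congr rfl
    intro b hb
    have hbj : b ≤ j := by have := Finset.mem_range.mp hb; omega
    rw [Polynomial.coeff_coe, show i+j-a-b = (i-a)+(j-b) by omega]
  rw [step1, step2, step3]

end Entry

def dvN : ℕ → Polynomial ℚ
  | 0 => 1
  | (m + 1) => kk (m+1) ^ 2 * pq m * pq (m+1)

lemma pq_ne (m : ℕ) : pq m ≠ 0 := by
  intro h
  have h0 := coeff_pq m 0
  rw [h] at h0
  simp at h0

lemma kk_ne (m : ℕ) : kk m ≠ 0 := by
  induction m using Nat.twoStepInduction with
  | zero => simp [kk]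
  | one => simp [kk]
  | more n _ ih2 =>
    rw [kk_step]
    exact mul_ne_zero (pow_ne_zero _ (pq_ne n)) ih2

lemma ev_ne (m : ℕ) : (Rt m).coeff 0 ≠ 0 := by
  cases m with
  | zero => simp [Rt]
  | succ k =>
    rw [(coeff0_Rt k).1]
    exact mul_ne_zero (kk_ne _) (pq_ne _)

lemma prodlem (N : ℕ) :
    ∏ m ∈ Finset.range (N+1), dvN m
      = (∏ m ∈ Finset.range (N+1), (Rt m).coeff 0) ^ 2 * pq N := by
  induction N with
  | zero =>
    simp [dvN, pq_zero, show (Rt 0 : Polynomial (Polynomial ℚ)) = 1 from rfl]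
  | succ N ih =>
    rw [show ∏ m ∈ Finset.range (N+1+1), dvN m
        = (∏ m ∈ Finset.range (N+1), dvN m) * dvN (N+1) from Finset.prod_range_succ _ _,
      show (∏ m ∈ Finset.range (N+1+1), (Rt m).coeff 0)
        = (∏ m ∈ Finset.range (N+1), (Rt m).coeff 0) * (Rt (N+1)).coeff 0 from
          Finset.prod_range_succ _ _,
      ih, (coeff0_Rt N).1, show dvN (N+1) = kk (N+1) ^ 2 * pq N * pq (N+1) from rfl]
    ring

end
end Stmt14

open Stmt14 in
/-- The Hankel transform of the moment polynomials `μ_n^{(1)}(y)`, the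
coefficients of `c·(1+yxc³)⁻¹`, equals `∑_{k=0}^{n} (-1)^k·C(2n+1-k, 2n+1-2k)·y^k`
in `ℚ[y]`. -/
theorem stmt14 (c : PowerSeries (Polynomial ℚ))
    (hc0 : PowerSeries.constantCoeff c = 1)
    (hc : c = 1 + PowerSeries.X * c ^ 2)
    (u : PowerSeries (Polynomial ℚ))
    (hu : (1 + PowerSeries.C (Polynomial.X : Polynomial ℚ) * PowerSeries.X * c ^ 3) * u = 1)
    (ν : ℕ → Polynomial ℚ)
    (hν : ∀ n : ℕ, ν n = PowerSeries.coeff n (c * u)) :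
    ∀ n : ℕ,
      (Matrix.of fun i j : Fin (n + 1) => ν ((i : ℕ) + (j : ℕ))).det =
        ∑ k ∈ Finset.range (n + 1),
          Polynomial.C ((-1 : ℚ) ^ k * ((2 * n + 1 - k).choose (2 * n + 1 - 2 * k) : ℚ)) *
            Polynomial.X ^ k := by
  intro n
  classical
  rw [pq_eq_stmt n]
  set Hm : Matrix (Fin (n+1)) (Fin (n+1)) (Polynomial ℚ) :=
    Matrix.of fun i j : Fin (n + 1) => ν ((i : ℕ) + (j : ℕ)) with hHm
  set Mm : Matrix (Fin (n+1)) (Fin (n+1)) (Polynomial ℚ) :=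
    Matrix.of (fun i k : Fin (n+1) =>
      if (k:ℕ) ≤ (i:ℕ) then (Rt (i:ℕ)).coeff ((i:ℕ) - (k:ℕ)) else 0) with hMm
  have entry : ∀ i j : Fin (n+1), (Mm * Hm * Mm.transpose) i j
      = PowerSeries.coeff ((i:ℕ)+(j:ℕ))
          (((Rt (i:ℕ) : Polynomial (Polynomial ℚ)) : PowerSeries (Polynomial ℚ))
            * (((Rt (j:ℕ) : Polynomial (Polynomial ℚ)) : PowerSeries (Polynomial ℚ)) * (c * u))) := by
    intro i j
    have expand : (Mm * Hm * Mm.transpose) i j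
        = ∑ k : Fin (n+1), ∑ l : Fin (n+1), Mm i k * (Hm k l * Mm j l) := by
      simp only [Matrix.mul_apply, Matrix.transpose_apply, Finset.sum_mul]
      rw [Finset.sum_comm]
      apply Finset.sum_congr rfl
      intro k _
      apply Finset.sum_congr rfl
      intro l _
      ring
    rw [expand]
    have conv1 : ∀ k : Fin (n+1), ∑ l : Fin (n+1), Mm i k * (Hm k l * Mm j l)
        = ∑ l ∈ Finset.range (n+1),
            (if (k:ℕ) ≤ (i:ℕ) then (Rt (i:ℕ)).coeff ((i:ℕ)-(k:ℕ)) else 0) *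
              ((if l ≤ (j:ℕ) then (Rt (j:ℕ)).coeff ((j:ℕ)-l) else 0)
                * (PowerSeries.coeff ((k:ℕ)+l) (c*u))) := by
      intro k
      rw [← Fin.sum_univ_eq_sum_range]
      apply Finset.sum_congr rfl
      intro l _
      simp only [hMm, hHm, Matrix.of_apply, hν ((k:ℕ)+(l:ℕ))]
      ring
    calc ∑ k : Fin (n+1), ∑ l : Fin (n+1), Mm i k * (Hm k l * Mm j l)
        = ∑ k ∈ Finset.range (n+1), ∑ l ∈ Finset.range (n+1),
            (if k ≤ (i:ℕ) then (Rt (i:ℕ)).coeff ((i:ℕ)-k) else 0) *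
              ((if l ≤ (j:ℕ) then (Rt (j:ℕ)).coeff ((j:ℕ)-l) else 0)
                * (PowerSeries.coeff (k+l) (c*u))) := by
          rw [← Fin.sum_univ_eq_sum_range]
          exact Finset.sum_congr rfl fun k _ => conv1 k
      _ = _ := entry_eq (Rt (i:ℕ)) (Rt (j:ℕ)) (c*u) i j n (by omega) (by omega)
            (degRt _) (degRt _)
  have diagval : Mm * Hm * Mm.transpose = Matrix.diagonal (fun i : Fin (n+1) => dvN (i:ℕ)) := by
    apply Matrix.ext
    intro i j
    rw [entry i j]
    rcases lt_trichotomy (i:ℕ) (j:ℕ) with hlt | heq | hgt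
    · obtain ⟨m, hm⟩ : ∃ m, (j:ℕ) = m + 1 := ⟨(j:ℕ) - 1, by omega⟩
      have hsym : ((Rt (i:ℕ) : Polynomial (Polynomial ℚ)) : PowerSeries (Polynomial ℚ))
            * (((Rt (j:ℕ) : Polynomial (Polynomial ℚ)) : PowerSeries (Polynomial ℚ)) * (c * u))
          = ((Rt (j:ℕ) : Polynomial (Polynomial ℚ)) : PowerSeries (Polynomial ℚ))
            * ((Rt (i:ℕ) : Polynomial (Polynomial ℚ)) : PowerSeries (Polynomial ℚ)) * (c * u) := by
        ring
      rw [hsym, show (i:ℕ)+(j:ℕ) = (j:ℕ)+(i:ℕ) by omega, hm]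
      rw [coeff_RtRt c u hc0 hc hu m (i:ℕ) (by omega)]
      rw [if_neg (by omega), Matrix.diagonal_apply_ne _ (by intro h; rw [h] at hlt; omega)]
    · have hij : i = j := Fin.ext heq
      subst hij
      rw [Matrix.diagonal_apply_eq]
      cases hi : (i:ℕ) with
      | zero =>
        rw [show ((Rt 0 : Polynomial (Polynomial ℚ)) : PowerSeries (Polynomial ℚ))
              * (((Rt 0 : Polynomial (Polynomial ℚ)) : PowerSeries (Polynomial ℚ)) * (c * u))
            = ((Rt 0 : Polynomial (Polynomial ℚ)) : PowerSeries (Polynomial ℚ))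
              * ((Rt 0 : Polynomial (Polynomial ℚ)) : PowerSeries (Polynomial ℚ)) * (c * u) by ring]
        rw [show (0:ℕ) + 0 = 0 from rfl]
        rw [coeff_Rt00 c u hc0 hu]
        rfl
      | succ m =>
        rw [show ((Rt (m+1) : Polynomial (Polynomial ℚ)) : PowerSeries (Polynomial ℚ))
              * (((Rt (m+1) : Polynomial (Polynomial ℚ)) : PowerSeries (Polynomial ℚ)) * (c * u))
            = ((Rt (m+1) : Polynomial (Polynomial ℚ)) : PowerSeries (Polynomial ℚ))
              * ((Rt (m+1) : Polynomial (Polynomial ℚ)) : PowerSeries (Polynomial ℚ)) * (c * u) by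
          ring]
        rw [coeff_RtRt c u hc0 hc hu m (m+1) (by omega), if_pos rfl]
        rfl
    · obtain ⟨m, hm⟩ : ∃ m, (i:ℕ) = m + 1 := ⟨(i:ℕ) - 1, by omega⟩
      rw [show ((Rt (i:ℕ) : Polynomial (Polynomial ℚ)) : PowerSeries (Polynomial ℚ))
            * (((Rt (j:ℕ) : Polynomial (Polynomial ℚ)) : PowerSeries (Polynomial ℚ)) * (c * u))
          = ((Rt (i:ℕ) : Polynomial (Polynomial ℚ)) : PowerSeries (Polynomial ℚ))
            * ((Rt (j:ℕ) : Polynomial (Polynomial ℚ)) : PowerSeries (Polynomial ℚ)) * (c * u) by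
        ring, hm]
      rw [coeff_RtRt c u hc0 hc hu m (j:ℕ) (by omega)]
      rw [if_neg (by omega), Matrix.diagonal_apply_ne _ (by intro h; rw [h] at hgt; omega)]
  have hdetM : Mm.det = ∏ m ∈ Finset.range (n+1), (Rt m).coeff 0 := by
    have htri : Mm.BlockTriangular OrderDual.toDual := by
      intro a b hab
      have : (a:ℕ) < (b:ℕ) := hab
      simp only [hMm, Matrix.of_apply]
      rw [if_neg (by omega)]
    rw [Matrix.det_of_lowerTriangular Mm htri]
    rw [← Fin.prod_univ_eq_prod_range]
    apply Finset.prod_congr rfl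
    intro m _
    simp only [hMm, Matrix.of_apply, if_pos (le_refl _), Nat.sub_self]
  have hdetD : (Mm * Hm * Mm.transpose).det
      = ∏ m ∈ Finset.range (n+1), dvN m := by
    rw [diagval, Matrix.det_diagonal, ← Fin.prod_univ_eq_prod_range]
  have hdetprod : Mm.det * Hm.det * Mm.transpose.det = (Mm * Hm * Mm.transpose).det := by
    rw [Matrix.det_mul, Matrix.det_mul]
  rw [Matrix.det_transpose, hdetM, hdetD, prodlem n] at hdetprod
  have hne : (∏ m ∈ Finset.range (n+1), (Rt m).coeff 0) ^ 2 ≠ 0 := by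
    apply pow_ne_zero
    rw [Finset.prod_ne_zero_iff]
    exact fun m _ => ev_ne m
  have : (∏ m ∈ Finset.range (n+1), (Rt m).coeff 0) ^ 2 * Hm.det
      = (∏ m ∈ Finset.range (n+1), (Rt m).coeff 0) ^ 2 * pq n := by
    linear_combination hdetprod
  exact mul_left_cancel₀ hne this
end

section
/- Let a, b ∈ ℚ and let G₁ ∈ ℚ[[x]] be the unique formal power series with constant term 1 satisfying G₁ = 1 + a·x·G₁ + b·x²·G₁². For n ≥ 0 let μ_n ∈ ℚ[y] be the coefficient of xⁿ in the inverse of 1 - (2a-2-y)·x + (y-a+1)·x²·G₁ in (ℚ[y])[[x]]. Then the Hankel transform satisfies det(μ_{i+j})_{0≤i,j≤n} = (-1)ⁿ·(y-a+1)ⁿ·b^{n(n-1)/2} in ℚ[y]. -/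
open PowerSeries Finset

noncomputable section A
variable (a b : ℚ)
def ee15 : Polynomial ℚ := Polynomial.X - Polynomial.C a + 1
def cc15 : Polynomial ℚ := Polynomial.C (2*a-2) - Polynomial.X
def lam15 (i : ℕ) : Polynomial ℚ := if i = 1 then -(ee15 a) else Polynomial.C b
def dg15 (i : ℕ) : Polynomial ℚ := if i = 0 then cc15 a else Polynomial.C a
def dd15 (i : ℕ) : Polynomial ℚ := if i = 0 then 1 else (-(ee15 a)) * (Polynomial.C b)^(i-1)
def Jf15 (i k : ℕ) : Polynomial ℚ :=
  if k = i+1 then 1 else if i = k+1 then lam15 a b i else if i = k then dg15 a i else 0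

lemma dd15_succ (i : ℕ) : dd15 a b (i+1) = lam15 a b (i+1) * dd15 a b i := by
  rcases i with _ | i
  · simp [dd15, lam15]
  · simp only [dd15, lam15, if_neg (by omega : ¬ i+1+1 = 1), if_neg (by omega : ¬ i+2 = 0),
      if_neg (by omega : ¬ i+1 = 0), Nat.add_sub_cancel]
    rw [pow_succ]; ring

lemma Jf15_eq_zero {i k : ℕ} (h : i+1 < k ∨ k+1 < i) : Jf15 a b i k = 0 := by
  unfold Jf15; split_ifs <;> first | omega | rfl

def Jmat15 (n : ℕ) : Matrix (Fin (n+1)) (Fin (n+1)) (Polynomial ℚ) :=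
  Matrix.of fun i j => Jf15 a b i j

variable (n : ℕ)

lemma powlt15 (m : ℕ) : ∀ i j : Fin (n+1), (i:ℕ) + m < (j:ℕ) → (Jmat15 a b n ^ m) i j = 0 := by
  induction m with
  | zero => intro i j h; rw [pow_zero]; exact Matrix.one_apply_ne (by intro he; rw [he] at h; omega)
  | succ m ih =>
    intro i j h
    rw [pow_succ, Matrix.mul_apply]
    apply Finset.sum_eq_zero
    intro k _
    by_cases hk : (i:ℕ) + m < (k:ℕ)
    · rw [ih i k hk, zero_mul]
    · have : (Jmat15 a b n) k j = 0 := Jf15_eq_zero a b (Or.inl (by omega))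
      rw [this, mul_zero]

lemma powgt15 (m : ℕ) : ∀ i j : Fin (n+1), (j:ℕ) + m < (i:ℕ) → (Jmat15 a b n ^ m) i j = 0 := by
  induction m with
  | zero => intro i j h; rw [pow_zero]; exact Matrix.one_apply_ne (by intro he; rw [he] at h; omega)
  | succ m ih =>
    intro i j h
    rw [pow_succ', Matrix.mul_apply]
    apply Finset.sum_eq_zero
    intro k _
    by_cases hk : (j:ℕ) + m < (k:ℕ)
    · rw [ih k j hk, mul_zero]
    · have : (Jmat15 a b n) i k = 0 := Jf15_eq_zero a b (Or.inr (by omega))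
      rw [this, zero_mul]

lemma superdiag15 (m : ℕ) : ∀ i j : Fin (n+1), (j:ℕ) = (i:ℕ) + m → (Jmat15 a b n ^ m) i j = 1 := by
  induction m with
  | zero =>
    intro i j h
    have : i = j := Fin.ext (by omega)
    rw [pow_zero, this, Matrix.one_apply_eq]
  | succ m ih =>
    intro i j h
    have hk0 : (i:ℕ) + m < n + 1 := by have := j.isLt; omega
    set k0 : Fin (n+1) := ⟨(i:ℕ) + m, hk0⟩ with hk0def
    rw [pow_succ, Matrix.mul_apply]
    rw [Finset.sum_eq_single k0]
    · have h1 : (Jmat15 a b n ^ m) i k0 = 1 := ih i k0 rfl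
      have h2 : (Jmat15 a b n) k0 j = 1 := by
        show Jf15 a b k0 j = 1
        unfold Jf15; rw [if_pos (by simp [hk0def]; omega)]
      rw [h1, h2, mul_one]
    · intro k _ hk
      by_cases hik : (i:ℕ) + m < (k:ℕ)
      · rw [powlt15 a b n m i k hik, zero_mul]
      · have hlt : (k:ℕ) < (i:ℕ) + m := by
          rcases Nat.lt_or_ge (k:ℕ) ((i:ℕ)+m) with h'|h'
          · exact h'
          · exact absurd (Fin.ext (by simp only [hk0def]; omega)) hk
        have : (Jmat15 a b n) k j = 0 := Jf15_eq_zero a b (Or.inl (by omega))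
        rw [this, mul_zero]
    · intro h; exact absurd (Finset.mem_univ k0) h

lemma subdiag15 (m : ℕ) : ∀ i : Fin (n+1), (i:ℕ) = m → (Jmat15 a b n ^ m) i 0 = dd15 a b m := by
  induction m with
  | zero =>
    intro i h
    have : i = 0 := Fin.ext (by simpa using h)
    rw [pow_zero, this, Matrix.one_apply_eq]; simp [dd15]
  | succ m ih =>
    intro i h
    have hk0 : m < n + 1 := by have := i.isLt; omega
    set k0 : Fin (n+1) := ⟨m, hk0⟩ with hk0def
    rw [pow_succ', Matrix.mul_apply]
    rw [Finset.sum_eq_single k0]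
    · have h1 : (Jmat15 a b n ^ m) k0 0 = dd15 a b m := ih k0 rfl
      have h2 : (Jmat15 a b n) i k0 = lam15 a b (m+1) := by
        show Jf15 a b i k0 = _
        unfold Jf15
        rw [if_neg (by simp [hk0def]; omega), if_pos (by simp [hk0def]; omega)]
        rw [h]
      rw [h1, h2, ← dd15_succ]
    · intro k _ hk
      by_cases hmk : m < (k:ℕ)
      · rw [powgt15 a b n m k 0 (by simpa using hmk), mul_zero]
      · have hlt : (k:ℕ) < m := by
          rcases Nat.lt_or_ge (k:ℕ) m with h'|h'
          · exact h'
          · exact absurd (Fin.ext (by simp only [hk0def]; omega)) hk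
        have : (Jmat15 a b n) i k = 0 := Jf15_eq_zero a b (Or.inr (by omega))
        rw [this, zero_mul]
    · intro h; exact absurd (Finset.mem_univ k0) h
variable (n : ℕ)

def Vmat15 : Matrix (Fin (n+1)) (Fin (n+1)) (PowerSeries (Polynomial ℚ)) :=
  Matrix.of fun i j => PowerSeries.mk fun m => (Jmat15 a b n ^ m) i j

def Amat15 : Matrix (Fin (n+1)) (Fin (n+1)) (PowerSeries (Polynomial ℚ)) :=
  Matrix.of fun i j => (if i = j then 1 else 0)
    - PowerSeries.X * PowerSeries.C ((Jmat15 a b n) i j)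

lemma AV15 : Amat15 a b n * Vmat15 a b n = 1 := by
  apply Matrix.ext; intro i j
  rw [Matrix.mul_apply]
  have hsplit : ∀ k : Fin (n+1), Amat15 a b n i k * Vmat15 a b n k j
      = (if i = k then Vmat15 a b n k j else 0)
        - PowerSeries.X * (PowerSeries.C ((Jmat15 a b n) i k) * Vmat15 a b n k j) := by
    intro k
    show ((if i = k then 1 else 0) - PowerSeries.X * PowerSeries.C ((Jmat15 a b n) i k))
        * Vmat15 a b n k j = _
    rw [sub_mul, ite_mul, one_mul, zero_mul, mul_assoc]
  rw [Finset.sum_congr rfl fun k _ => hsplit k, Finset.sum_sub_distrib,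
    Finset.sum_ite_eq univ i, if_pos (Finset.mem_univ i), ← Finset.mul_sum]
  apply PowerSeries.ext; intro m
  rcases m with _ | m
  · by_cases hij : i = j <;>
      simp [Vmat15, Matrix.one_apply, hij]
  · have h1 : (PowerSeries.coeff (m+1))
        (PowerSeries.X * ∑ k, PowerSeries.C ((Jmat15 a b n) i k) * Vmat15 a b n k j)
        = ((Jmat15 a b n) * (Jmat15 a b n ^ m)) i j := by
      rw [PowerSeries.coeff_succ_X_mul, map_sum, Matrix.mul_apply]
      refine Finset.sum_congr rfl fun k _ => ?_
      rw [PowerSeries.coeff_C_mul]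
      simp [Vmat15]
    rw [map_sub, h1]
    have h2 : (PowerSeries.coeff (m+1)) (Vmat15 a b n i j)
        = (Jmat15 a b n ^ (m+1)) i j := by simp [Vmat15]
    rw [h2, ← pow_succ', sub_self]
    by_cases hij : i = j <;> simp [Matrix.one_apply, hij, PowerSeries.coeff_one]

lemma VA15 : Vmat15 a b n * Amat15 a b n = 1 := by
  apply Matrix.ext; intro i j
  rw [Matrix.mul_apply]
  have hsplit : ∀ k : Fin (n+1), Vmat15 a b n i k * Amat15 a b n k j
      = (if k = j then Vmat15 a b n i k else 0)
        - PowerSeries.X * (PowerSeries.C ((Jmat15 a b n) k j) * Vmat15 a b n i k) := by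
    intro k
    show Vmat15 a b n i k * ((if k = j then 1 else 0)
        - PowerSeries.X * PowerSeries.C ((Jmat15 a b n) k j)) = _
    rw [mul_sub, mul_ite, mul_one, mul_zero]
    ring_nf
  rw [Finset.sum_congr rfl fun k _ => hsplit k, Finset.sum_sub_distrib,
    Finset.sum_ite_eq' univ j, if_pos (Finset.mem_univ j), ← Finset.mul_sum]
  apply PowerSeries.ext; intro m
  rcases m with _ | m
  · by_cases hij : i = j <;>
      simp [Vmat15, Matrix.one_apply, hij]
  · have h1 : (PowerSeries.coeff (m+1))
        (PowerSeries.X * ∑ k, PowerSeries.C ((Jmat15 a b n) k j) * Vmat15 a b n i k)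
        = ((Jmat15 a b n ^ m) * (Jmat15 a b n)) i j := by
      rw [PowerSeries.coeff_succ_X_mul, map_sum, Matrix.mul_apply]
      refine Finset.sum_congr rfl fun k _ => ?_
      rw [PowerSeries.coeff_C_mul]
      simp [Vmat15]; ring
    rw [map_sub, h1]
    have h2 : (PowerSeries.coeff (m+1)) (Vmat15 a b n i j)
        = (Jmat15 a b n ^ (m+1)) i j := by simp [Vmat15]
    rw [h2, ← pow_succ, sub_self]
    by_cases hij : i = j <;> simp [Matrix.one_apply, hij, PowerSeries.coeff_one]
def w15 (G' u : PowerSeries (Polynomial ℚ)) (k : ℕ) : PowerSeries (Polynomial ℚ) :=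
  PowerSeries.C (dd15 a b k) * (PowerSeries.X ^ k * (G' ^ k * u))

lemma w15_zero (G' u : PowerSeries (Polynomial ℚ)) : w15 a b G' u 0 = u := by
  simp [w15, dd15]

lemma row15_zero (G' u : PowerSeries (Polynomial ℚ))
    (hu : (1 - PowerSeries.C (cc15 a) * PowerSeries.X
      + PowerSeries.C (ee15 a) * PowerSeries.X ^ 2 * G') * u = 1) :
    u = 1 + PowerSeries.X * (PowerSeries.C (cc15 a) * u + w15 a b G' u 1) := by
  simp only [w15, dd15, if_neg (one_ne_zero), pow_one, Nat.sub_self, pow_zero, map_neg, map_mul,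
    map_one, mul_one]
  linear_combination hu

lemma row15_succ (G' u : PowerSeries (Polynomial ℚ))
    (hG' : G' = 1 + PowerSeries.C (Polynomial.C a) * PowerSeries.X * G' +
      PowerSeries.C (Polynomial.C b) * PowerSeries.X ^ 2 * G' ^ 2) (k : ℕ) :
    w15 a b G' u (k+1) = PowerSeries.X * (PowerSeries.C (lam15 a b (k+1)) * w15 a b G' u k
      + PowerSeries.C (Polynomial.C a) * w15 a b G' u (k+1) + w15 a b G' u (k+2)) := by
  have h1 : dd15 a b (k+1) = lam15 a b (k+1) * dd15 a b k := dd15_succ a b k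
  have h2 : dd15 a b (k+2) = Polynomial.C b * dd15 a b (k+1) := by
    rw [dd15_succ]; simp [lam15]
  simp only [w15, h2, h1, map_mul]
  linear_combination (PowerSeries.C (lam15 a b (k+1)) *
    PowerSeries.C (dd15 a b k) * PowerSeries.X ^ (k+1) * G' ^ k * u) * hG'

lemma ptw15 (w : ℕ → PowerSeries (Polynomial ℚ)) (i k : ℕ) :
    PowerSeries.C (Jf15 a b i k) * w k =
      (if k = i+1 then w (i+1) else 0)
      + (if i = 0 then 0 else if k = i-1 then PowerSeries.C (lam15 a b i) * w (i-1) else 0)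
      + (if k = i then PowerSeries.C (dg15 a i) * w i else 0) := by
  unfold Jf15
  split_ifs <;> first
    | omega
    | (subst_vars; simp)

lemma sumrow15 (n : ℕ) (w : ℕ → PowerSeries (Polynomial ℚ)) (i : ℕ) (hi : i ≤ n) :
    ∑ k ∈ range (n+1), PowerSeries.C (Jf15 a b i k) * w k =
      (if i = 0 then 0 else PowerSeries.C (lam15 a b i) * w (i-1))
      + PowerSeries.C (dg15 a i) * w i
      + (if i < n then w (i+1) else 0) := by
  rw [Finset.sum_congr rfl fun k _ => ptw15 a b w i k]
  rw [Finset.sum_add_distrib, Finset.sum_add_distrib]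
  have h1 : (∑ k ∈ range (n+1), if k = i+1 then w (i+1) else 0)
      = (if i < n then w (i+1) else 0) := by
    rw [Finset.sum_ite_eq' (range (n+1)) (i+1)]
    simp only [Finset.mem_range]
    congr 1
    · exact propext (by omega)
  have h2 : (∑ k ∈ range (n+1), if k = i then PowerSeries.C (dg15 a i) * w i else 0)
      = PowerSeries.C (dg15 a i) * w i := by
    rw [Finset.sum_ite_eq' (range (n+1)) i, if_pos (Finset.mem_range.mpr (by omega))]
  have h3 : (∑ k ∈ range (n+1), if i = 0 then 0 else
      if k = i-1 then PowerSeries.C (lam15 a b i) * w (i-1) else 0)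
      = (if i = 0 then 0 else PowerSeries.C (lam15 a b i) * w (i-1)) := by
    by_cases h : i = 0
    · simp [h]
    · simp only [if_neg h]
      rw [Finset.sum_ite_eq' (range (n+1)) (i-1), if_pos (Finset.mem_range.mpr (by omega))]
  rw [h1, h2, h3]
  ring


lemma finrow15 (G' u : PowerSeries (Polynomial ℚ))
    (hu : (1 - PowerSeries.C (cc15 a) * PowerSeries.X
      + PowerSeries.C (ee15 a) * PowerSeries.X ^ 2 * G') * u = 1)
    (hG' : G' = 1 + PowerSeries.C (Polynomial.C a) * PowerSeries.X * G' +
      PowerSeries.C (Polynomial.C b) * PowerSeries.X ^ 2 * G' ^ 2)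
    (i : ℕ) (hi : i ≤ n) :
    w15 a b G' u i = (if i = 0 then 1 else 0)
      + PowerSeries.X * (∑ k ∈ range (n+1), PowerSeries.C (Jf15 a b i k) * w15 a b G' u k)
      + (if i = n then PowerSeries.X * w15 a b G' u (i+1) else 0) := by
  rw [sumrow15 a b n (w15 a b G' u) i hi]
  have hw0 : w15 a b G' u 0 = u := w15_zero a b G' u
  rcases i with _ | j
  · have h0 := row15_zero a b G' u hu
    simp only [dg15, hw0, reduceIte]
    by_cases hn : (0:ℕ) = n
    · rw [if_neg (by omega : ¬ (0:ℕ) < n), if_pos hn]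
      linear_combination h0
    · rw [if_pos (by omega : (0:ℕ) < n), if_neg hn]
      linear_combination h0
  · have hs := row15_succ a b G' u hG' j
    simp only [dg15, Nat.add_sub_cancel, if_neg (Nat.succ_ne_zero j),
      if_neg (Nat.succ_ne_zero j)]
    by_cases hn : j + 1 = n
    · rw [if_neg (by omega : ¬ j + 1 < n), if_pos hn]
      linear_combination hs
    · rw [if_pos (by omega : j + 1 < n), if_neg hn]
      linear_combination hs

lemma key15 (G' u : PowerSeries (Polynomial ℚ))
    (hu : (1 - PowerSeries.C (cc15 a) * PowerSeries.X
      + PowerSeries.C (ee15 a) * PowerSeries.X ^ 2 * G') * u = 1)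
    (hG' : G' = 1 + PowerSeries.C (Polynomial.C a) * PowerSeries.X * G' +
      PowerSeries.C (Polynomial.C b) * PowerSeries.X ^ 2 * G' ^ 2)
    (m : ℕ) (hm : m ≤ 2*n+1) :
    PowerSeries.coeff m u = (Jmat15 a b n ^ m) 0 0 := by
  set w := w15 a b G' u with hwdef
  have hAw : (Amat15 a b n).mulVec (fun k : Fin (n+1) => w k) = fun i : Fin (n+1) =>
      (if (i:ℕ) = 0 then 1 else 0)
        + (if (i:ℕ) = n then PowerSeries.X * w ((i:ℕ)+1) else 0) := by
    funext i
    have hexp : (Amat15 a b n).mulVec (fun k : Fin (n+1) => w k) i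
        = w i - PowerSeries.X *
            ∑ k ∈ range (n+1), PowerSeries.C (Jf15 a b i k) * w k := by
      simp only [Matrix.mulVec, dotProduct]
      have hsplit : ∀ k : Fin (n+1),
          Amat15 a b n i k * w k
          = (if i = k then w (k:ℕ) else 0)
            - PowerSeries.X * (PowerSeries.C (Jf15 a b (i:ℕ) (k:ℕ)) * w (k:ℕ)) := by
        intro k
        show ((if i = k then 1 else 0) - PowerSeries.X * PowerSeries.C ((Jmat15 a b n) i k))
            * w k = _
        rw [sub_mul, ite_mul, one_mul, zero_mul, mul_assoc]
        rfl
      rw [Finset.sum_congr rfl fun k _ => hsplit k, Finset.sum_sub_distrib,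
        Finset.sum_ite_eq univ i, if_pos (Finset.mem_univ i), ← Finset.mul_sum,
        Fin.sum_univ_eq_sum_range (fun k => PowerSeries.C (Jf15 a b (i:ℕ) k) * w k) (n+1)]
    rw [hexp]
    have hfr := finrow15 a b n G' u hu hG' i (by omega)
    linear_combination hfr
  have hwv : (fun k : Fin (n+1) => w k)
      = (Vmat15 a b n).mulVec ((Amat15 a b n).mulVec (fun k : Fin (n+1) => w k)) := by
    rw [Matrix.mulVec_mulVec, VA15, Matrix.one_mulVec]
  have h0 : w 0 = ∑ k : Fin (n+1), Vmat15 a b n 0 k *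
      ((if (k:ℕ) = 0 then 1 else 0)
        + (if (k:ℕ) = n then PowerSeries.X * w ((k:ℕ)+1) else 0)) := by
    conv_lhs => rw [show w (0:ℕ) = (fun k : Fin (n+1) => w (k:ℕ)) 0 from rfl, hwv, hAw]
    simp only [Matrix.mulVec, dotProduct]
  have hS1 : ∑ k : Fin (n+1), Vmat15 a b n 0 k * (if (k:ℕ) = 0 then (1:PowerSeries (Polynomial ℚ)) else 0)
      = Vmat15 a b n 0 0 := by
    have : ∀ k : Fin (n+1), Vmat15 a b n 0 k * (if (k:ℕ) = 0 then (1:PowerSeries (Polynomial ℚ)) else 0)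
        = if k = 0 then Vmat15 a b n 0 k else 0 := by
      intro k
      by_cases hk : k = (0 : Fin (n+1))
      · rw [if_pos hk, if_pos (by simp [hk]), mul_one]
      · rw [if_neg hk, if_neg (by intro h; apply hk; ext; rw [h]; simp), mul_zero]
    rw [Finset.sum_congr rfl fun k _ => this k,
      Finset.sum_ite_eq' univ (0 : Fin (n+1)) (fun k => Vmat15 a b n 0 k),
      if_pos (Finset.mem_univ _)]
  have hlast : n < n + 1 := by omega
  have hS2 : ∑ k : Fin (n+1), Vmat15 a b n 0 k *
      (if (k:ℕ) = n then PowerSeries.X * w ((k:ℕ)+1) else 0)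
      = Vmat15 a b n 0 ⟨n, hlast⟩ * (PowerSeries.X * w (n+1)) := by
    have : ∀ k : Fin (n+1), Vmat15 a b n 0 k *
        (if (k:ℕ) = n then PowerSeries.X * w ((k:ℕ)+1) else 0)
        = if k = ⟨n, hlast⟩ then Vmat15 a b n 0 k * (PowerSeries.X * w (n+1)) else 0 := by
      intro k
      by_cases hk : k = (⟨n, hlast⟩ : Fin (n+1))
      · rw [if_pos (by simp [hk]), if_pos hk, hk]
      · rw [if_neg (by simpa [Fin.ext_iff] using hk), if_neg hk, mul_zero]
    rw [Finset.sum_congr rfl fun k _ => this k,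
      Finset.sum_ite_eq' univ (⟨n, hlast⟩ : Fin (n+1))
        (fun k => Vmat15 a b n 0 k * (PowerSeries.X * w (n+1))),
      if_pos (Finset.mem_univ _)]
  have hu0 : u = w 0 := (w15_zero a b G' u).symm
  have hzero : PowerSeries.coeff m
      (Vmat15 a b n 0 ⟨n, hlast⟩ * (PowerSeries.X * w (n+1))) = 0 := by
    have hfac : PowerSeries.X * w (n+1) = PowerSeries.X^(n+2) *
        (PowerSeries.C (dd15 a b (n+1)) * (G'^(n+1) * u)) := by
      rw [hwdef]; unfold w15; ring
    rw [PowerSeries.coeff_mul]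
    apply Finset.sum_eq_zero
    intro p hp
    rw [Finset.HasAntidiagonal.mem_antidiagonal] at hp
    by_cases h1 : p.1 < n
    · have : PowerSeries.coeff p.1 (Vmat15 a b n 0 ⟨n, hlast⟩) = 0 := by
        have := powlt15 a b n p.1 0 ⟨n, hlast⟩ (by simpa using h1)
        simpa [Vmat15] using this
      rw [this, zero_mul]
    · have h2 : p.2 < n + 2 := by omega
      have : PowerSeries.coeff p.2 (PowerSeries.X * w (n+1)) = 0 := by
        rw [hfac]
        exact PowerSeries.X_pow_dvd_iff.mp (dvd_mul_right _ _) p.2 h2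
      rw [this, mul_zero]
  calc PowerSeries.coeff m u
      = PowerSeries.coeff m (w 0) := by rw [← hu0]
    _ = (Jmat15 a b n ^ m) 0 0 := by
        rw [h0]
        simp only [mul_add]
        rw [Finset.sum_add_distrib, hS1, hS2, map_add, hzero, add_zero]
        simp [Vmat15]
end A

/-- Let `G₁ = 1 + axG₁ + bx²G₁²`. The moments `μ_n(y)` with generating function
`(1 - (2a-2-y)x + (y-a+1)x²G₁)⁻¹` have Hankel transform
`(-1)ⁿ(y-a+1)ⁿ b^{n(n-1)/2}` in `ℚ[y]`. -/
theorem stmt15 (a b : ℚ) (G₁ : PowerSeries ℚ)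
    (hG0 : PowerSeries.constantCoeff G₁ = 1)
    (hG : G₁ = 1 + PowerSeries.C a * PowerSeries.X * G₁ +
      PowerSeries.C b * PowerSeries.X ^ 2 * G₁ ^ 2)
    (u : PowerSeries (Polynomial ℚ))
    (hu : (1 - (PowerSeries.C (Polynomial.C (2 * a - 2) - Polynomial.X)) *
            PowerSeries.X +
          (PowerSeries.C (Polynomial.X - Polynomial.C a + 1)) *
            PowerSeries.X ^ 2 *
            PowerSeries.map (algebraMap ℚ (Polynomial ℚ)) G₁) * u = 1)
    (μ : ℕ → Polynomial ℚ)
    (hμ : ∀ n : ℕ, μ n = PowerSeries.coeff n u) :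
    ∀ n : ℕ,
      (Matrix.of fun i j : Fin (n + 1) => μ ((i : ℕ) + (j : ℕ))).det =
        (-1 : Polynomial ℚ) ^ n * (Polynomial.X - Polynomial.C a + 1) ^ n *
          Polynomial.C (b ^ (n * (n - 1) / 2)) := by
  intro n
  have hG' : PowerSeries.map (algebraMap ℚ (Polynomial ℚ)) G₁
      = 1 + PowerSeries.C (Polynomial.C a) * PowerSeries.X *
          PowerSeries.map (algebraMap ℚ (Polynomial ℚ)) G₁ +
        PowerSeries.C (Polynomial.C b) * PowerSeries.X ^ 2 *
          (PowerSeries.map (algebraMap ℚ (Polynomial ℚ)) G₁) ^ 2 := by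
    have h := congrArg (PowerSeries.map (algebraMap ℚ (Polynomial ℚ))) hG
    simpa [map_add, map_mul, map_pow, map_one, PowerSeries.map_X, PowerSeries.map_C,
      Polynomial.algebraMap_eq] using h
  have hu' : (1 - PowerSeries.C (cc15 a) * PowerSeries.X
      + PowerSeries.C (ee15 a) * PowerSeries.X ^ 2 *
        PowerSeries.map (algebraMap ℚ (Polynomial ℚ)) G₁) * u = 1 := hu
  have hkey : ∀ i j : Fin (n+1),
      μ ((i:ℕ)+(j:ℕ)) = (Jmat15 a b n ^ ((i:ℕ)+(j:ℕ))) 0 0 := by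
    intro i j
    rw [hμ]
    exact key15 a b n _ u hu' hG' _ (by have := i.isLt; have := j.isLt; omega)
  set P : Matrix (Fin (n+1)) (Fin (n+1)) (Polynomial ℚ) :=
    Matrix.of fun i k => (Jmat15 a b n ^ (i:ℕ)) 0 k with hPdef
  set Q : Matrix (Fin (n+1)) (Fin (n+1)) (Polynomial ℚ) :=
    Matrix.of fun k j => (Jmat15 a b n ^ (j:ℕ)) k 0 with hQdef
  have hfact : (Matrix.of fun i j : Fin (n+1) => μ ((i:ℕ)+(j:ℕ))) = P * Q := by
    apply Matrix.ext; intro i j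
    rw [Matrix.mul_apply]
    show μ ((i:ℕ) + (j:ℕ)) = _
    rw [hkey i j, pow_add, Matrix.mul_apply]
    rfl
  have hP : P.BlockTriangular OrderDual.toDual := by
    intro i j hij
    exact powlt15 a b n (i:ℕ) 0 j
      (by simpa using (Fin.lt_iff_val_lt_val.mp (OrderDual.toDual_lt_toDual.mp hij)))
  have hQ : Q.BlockTriangular id := by
    intro i j hij
    exact powgt15 a b n (j:ℕ) i 0 (by simpa using (Fin.lt_iff_val_lt_val.mp hij))
  have hdetP : P.det = 1 := by
    rw [Matrix.det_of_lowerTriangular P hP]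
    apply Finset.prod_eq_one
    intro i _
    exact superdiag15 a b n (i:ℕ) 0 i (by simp)
  have hdetQ : Q.det = ∏ j : Fin (n+1), dd15 a b (j:ℕ) := by
    rw [Matrix.det_of_upperTriangular hQ]
    exact Finset.prod_congr rfl fun j _ => subdiag15 a b n (j:ℕ) j rfl
  have hprod : ∏ j : Fin (n+1), dd15 a b (j:ℕ)
      = (-1 : Polynomial ℚ)^n * (ee15 a)^n * Polynomial.C (b ^ (n*(n-1)/2)) := by
    rw [Fin.prod_univ_eq_prod_range (fun j => dd15 a b j) (n+1), Finset.prod_range_succ']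
    simp only [dd15, if_neg (Nat.succ_ne_zero _), reduceIte, Nat.add_sub_cancel, mul_one]
    rw [Finset.prod_mul_distrib, Finset.prod_const, Finset.prod_pow_eq_pow_sum,
      Finset.sum_range_id, ← map_pow, neg_pow, Finset.card_range]
  rw [hfact, Matrix.det_mul, hdetP, hdetQ, hprod, one_mul]
  rfl
end

section
/- Let g, f ∈ ℚ[[x]] with g having nonzero constant term, f having zero constant term and nonzero coefficient of x, and let f̄ ∈ ℚ[[x]] be the compositional inverse of f (so f̄∘f = x and f∘f̄ = x, f̄ having zero constant term). Define F = f̄∘(-f) and G = g·(g∘F)⁻¹ (note g∘F has the same nonzero constant term as g, hence is invertible). Then F∘F = x and G·(G∘F) = 1; that is, the Riordan array (g, f)·(1/g(f̄(-x)), f̄(-x)) = (g/(g∘f̄∘(-f)), f̄∘(-f)) is a Riordan involution. -/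
open PowerSeries Finset

/-- Substitution `f ∘ h` of a power series `h` (intended to have zero constant
term) into a power series `f`: the coefficient of `xⁿ` is
`∑_{k=0}^{n} f_k · [xⁿ](hᵏ)`. -/
noncomputable def PowerSeries.comp {R : Type*} [CommSemiring R]
    (f h : PowerSeries R) : PowerSeries R :=
  PowerSeries.mk fun n => ∑ k ∈ Finset.range (n + 1),
    (PowerSeries.coeff k f) * (PowerSeries.coeff n (h ^ k))

namespace RiordanAux
open PowerSeries Finset

lemma coeff_pow_eq_zero {h : ℚ⟦X⟧} (h0 : constantCoeff h = 0) {n k : ℕ} (hk : n < k) :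
    coeff n (h ^ k) = 0 :=
  X_pow_dvd_iff.mp (pow_dvd_pow_of_dvd (X_dvd_iff.mpr h0) k) n hk

lemma coeff_comp (f : ℚ⟦X⟧) {h : ℚ⟦X⟧} (h0 : constantCoeff h = 0) {n m : ℕ} (hm : n < m) :
    coeff n (f.comp h) = ∑ k ∈ range m, coeff k f * coeff n (h ^ k) := by
  rw [PowerSeries.comp, coeff_mk]
  apply Finset.sum_subset
  · intro x hx; simp only [mem_range] at *; omega
  · intro x _ hx'
    have : n < x := by simp only [mem_range] at hx'; omega
    rw [coeff_pow_eq_zero h0 this, mul_zero]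

lemma constantCoeff_comp (f h : ℚ⟦X⟧) :
    constantCoeff (f.comp h) = constantCoeff f := by
  rw [← coeff_zero_eq_constantCoeff_apply, PowerSeries.comp, coeff_mk]
  simp

lemma comp_one (h : ℚ⟦X⟧) : (1 : ℚ⟦X⟧).comp h = 1 := by
  ext n
  rw [PowerSeries.comp, coeff_mk, Finset.sum_eq_single 0]
  · simp
  · intro k _ hk; simp [PowerSeries.coeff_one, hk]
  · simp

lemma comp_neg (f h : ℚ⟦X⟧) : (-f).comp h = -(f.comp h) := by
  ext n
  simp [PowerSeries.comp, Finset.sum_neg_distrib]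

lemma comp_X_right (f : ℚ⟦X⟧) : f.comp X = f := by
  ext n
  rw [PowerSeries.comp, coeff_mk]
  simp [PowerSeries.coeff_X_pow, Finset.sum_ite_eq', Nat.lt_succ_self]

lemma comp_X_left {h : ℚ⟦X⟧} (h0 : constantCoeff h = 0) : (X : ℚ⟦X⟧).comp h = h := by
  ext n
  rw [PowerSeries.comp, coeff_mk]
  rcases n with _ | n
  · simpa [PowerSeries.coeff_X] using h0.symm
  · rw [Finset.sum_eq_single 1]
    · simp
    · intro k _ hk; simp [PowerSeries.coeff_X, hk]
    · intro hmem; exact absurd (by simp) hmem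

lemma comp_mul (f g : ℚ⟦X⟧) {h : ℚ⟦X⟧} (h0 : constantCoeff h = 0) :
    (f * g).comp h = f.comp h * g.comp h := by
  ext n
  have key : ∀ S : ℚ, S = S := fun _ => rfl
  -- both sides equal the box sum
  have hbox : coeff n ((f * g).comp h) =
      ∑ q ∈ range (n+1) ×ˢ range (n+1),
        coeff q.1 f * coeff q.2 g * coeff n (h ^ (q.1 + q.2)) := by
    rw [coeff_comp _ h0 (Nat.lt_succ_self n)]
    have step1 : ∀ k ∈ range (n+1),
        coeff k (f * g) * coeff n (h ^ k) =
        ∑ q ∈ Finset.HasAntidiagonal.antidiagonal k,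
          coeff q.1 f * coeff q.2 g * coeff n (h ^ (q.1 + q.2)) := by
      intro k _
      rw [PowerSeries.coeff_mul, Finset.sum_mul]
      refine Finset.sum_congr rfl fun q hq => ?_
      rw [Finset.HasAntidiagonal.mem_antidiagonal] at hq
      rw [hq]
    have hdisj : Set.PairwiseDisjoint (↑(range (n+1)))
        (fun k => (Finset.HasAntidiagonal.antidiagonal k : Finset (ℕ × ℕ))) := by
      intro a _ b _ hab
      simp only [Function.onFun, Finset.disjoint_left, Finset.HasAntidiagonal.mem_antidiagonal]
      intro q h1 h2
      exact hab (h1 ▸ h2 ▸ rfl)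
    rw [Finset.sum_congr rfl step1, ← Finset.sum_biUnion hdisj]
    apply Finset.sum_subset
    · intro q hq
      simp only [Finset.mem_biUnion, mem_range, Finset.HasAntidiagonal.mem_antidiagonal] at hq
      obtain ⟨k, hk, hqk⟩ := hq
      simp only [Finset.mem_product, mem_range]
      omega
    · intro q hq hq'
      simp only [Finset.mem_biUnion, mem_range, Finset.HasAntidiagonal.mem_antidiagonal] at hq'
      have : n < q.1 + q.2 := by
        by_contra hc
        push_neg at hc
        exact hq' ⟨q.1 + q.2, by omega, rfl⟩
      rw [coeff_pow_eq_zero h0 this, mul_zero]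
  rw [hbox, PowerSeries.coeff_mul, Finset.sum_product]
  have hrhs : ∀ q ∈ Finset.HasAntidiagonal.antidiagonal n,
      coeff q.1 (f.comp h) * coeff q.2 (g.comp h) =
      ∑ i ∈ range (n+1), ∑ j ∈ range (n+1),
        (coeff i f * coeff q.1 (h ^ i)) * (coeff j g * coeff q.2 (h ^ j)) := by
    intro q hq
    rw [Finset.HasAntidiagonal.mem_antidiagonal] at hq
    rw [coeff_comp f h0 (show q.1 < n+1 by omega),
        coeff_comp g h0 (show q.2 < n+1 by omega), Finset.sum_mul_sum]
  have hlhs : ∀ i ∈ range (n+1), ∀ j ∈ range (n+1),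
      coeff i f * coeff j g * coeff n (h ^ (i + j)) =
      ∑ q ∈ Finset.HasAntidiagonal.antidiagonal n,
        (coeff i f * coeff q.1 (h ^ i)) * (coeff j g * coeff q.2 (h ^ j)) := by
    intro i _ j _
    rw [pow_add, PowerSeries.coeff_mul, Finset.mul_sum]
    exact Finset.sum_congr rfl fun q _ => by ring
  calc ∑ i ∈ range (n+1), ∑ j ∈ range (n+1),
        coeff i f * coeff j g * coeff n (h ^ (i + j))
      = ∑ i ∈ range (n+1), ∑ j ∈ range (n+1), ∑ q ∈ Finset.HasAntidiagonal.antidiagonal n,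
          (coeff i f * coeff q.1 (h ^ i)) * (coeff j g * coeff q.2 (h ^ j)) :=
        Finset.sum_congr rfl fun i hi => Finset.sum_congr rfl fun j hj => hlhs i hi j hj
    _ = ∑ i ∈ range (n+1), ∑ q ∈ Finset.HasAntidiagonal.antidiagonal n, ∑ j ∈ range (n+1),
          (coeff i f * coeff q.1 (h ^ i)) * (coeff j g * coeff q.2 (h ^ j)) :=
        Finset.sum_congr rfl fun i _ => Finset.sum_comm
    _ = ∑ q ∈ Finset.HasAntidiagonal.antidiagonal n, ∑ i ∈ range (n+1), ∑ j ∈ range (n+1),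
          (coeff i f * coeff q.1 (h ^ i)) * (coeff j g * coeff q.2 (h ^ j)) :=
        Finset.sum_comm
    _ = ∑ q ∈ Finset.HasAntidiagonal.antidiagonal n, coeff q.1 (f.comp h) * coeff q.2 (g.comp h) :=
        (Finset.sum_congr rfl hrhs).symm

lemma comp_pow (g : ℚ⟦X⟧) {h : ℚ⟦X⟧} (h0 : constantCoeff h = 0) (k : ℕ) :
    (g ^ k).comp h = (g.comp h) ^ k := by
  induction k with
  | zero => simpa using comp_one h
  | succ k ih => rw [pow_succ, comp_mul _ _ h0, ih, pow_succ]

lemma comp_assoc (f g : ℚ⟦X⟧) {h : ℚ⟦X⟧} (hg : constantCoeff g = 0)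
    (h0 : constantCoeff h = 0) :
    (f.comp g).comp h = f.comp (g.comp h) := by
  have hgh : constantCoeff (g.comp h) = 0 := by
    rw [constantCoeff_comp]; exact hg
  ext n
  rw [coeff_comp _ h0 (Nat.lt_succ_self n), coeff_comp _ hgh (Nat.lt_succ_self n)]
  have step : ∀ j ∈ range (n+1),
      coeff j (f.comp g) * coeff n (h ^ j) =
      ∑ k ∈ range (n+1), coeff k f * coeff j (g ^ k) * coeff n (h ^ j) := by
    intro j hj
    rw [mem_range] at hj
    rw [coeff_comp f hg hj, Finset.sum_mul]
  rw [Finset.sum_congr rfl step, Finset.sum_comm]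
  refine Finset.sum_congr rfl fun k _ => ?_
  rw [← comp_pow g h0 k, coeff_comp _ h0 (Nat.lt_succ_self n), Finset.mul_sum]
  refine Finset.sum_congr rfl fun j _ => ?_
  ring

end RiordanAux

/-- For any Riordan array `(g, f)` with compositional inverse `f̄` of `f`, the
product array `(g/(g∘f̄∘(-f)), f̄∘(-f))` is a Riordan involution. -/
theorem stmt16 (g f fbar : PowerSeries ℚ)
    (hg0 : PowerSeries.constantCoeff g ≠ 0)
    (hf0 : PowerSeries.constantCoeff f = 0)
    (hf1 : PowerSeries.coeff 1 f ≠ 0)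
    (hfbar0 : PowerSeries.constantCoeff fbar = 0)
    (hfbar1 : PowerSeries.comp fbar f = PowerSeries.X)
    (hfbar2 : PowerSeries.comp f fbar = PowerSeries.X)
    (F G : PowerSeries ℚ)
    (hF : F = PowerSeries.comp fbar (-f))
    (hG : G = g * (PowerSeries.comp g F)⁻¹) :
    PowerSeries.comp F F = PowerSeries.X ∧ G * PowerSeries.comp G F = 1 := by

  have hnf0 : constantCoeff (-f) = 0 := by simp [hf0]
  have hF0 : constantCoeff F = 0 := by
    rw [hF, RiordanAux.constantCoeff_comp]; exact hfbar0
  -- f ∘ F = -f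
  have hfF : f.comp F = -f := by
    rw [hF, ← RiordanAux.comp_assoc f fbar hfbar0 hnf0, hfbar2,
      RiordanAux.comp_X_left hnf0]
  -- F ∘ F = X
  have hFF : F.comp F = PowerSeries.X := by
    nth_rewrite 1 [hF]
    rw [RiordanAux.comp_assoc fbar (-f) hnf0 hF0, RiordanAux.comp_neg, hfF,
      neg_neg, hfbar1]
  refine ⟨hFF, ?_⟩
  set A := g.comp F with hA
  have hA0 : constantCoeff A ≠ 0 := by
    rw [hA, RiordanAux.constantCoeff_comp]; exact hg0
  have hAinv : A * A⁻¹ = 1 := PowerSeries.mul_inv_cancel A hA0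
  have hAF : A.comp F = g := by
    rw [hA, RiordanAux.comp_assoc g F hF0 hF0, hFF, RiordanAux.comp_X_right]
  have key : g * (A⁻¹).comp F = 1 := by
    have := congrArg (fun t => PowerSeries.comp t F) hAinv
    simpa [RiordanAux.comp_mul _ _ hF0, RiordanAux.comp_one, hAF] using this
  have hGF : G.comp F = A * (A⁻¹).comp F := by
    rw [hG, RiordanAux.comp_mul _ _ hF0, ← hA]
  rw [hGF, hG, show g * A⁻¹ * (A * (A⁻¹).comp F) = g * (A⁻¹).comp F * (A * A⁻¹) by ring,
    key, hAinv, mul_one]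
end

section
/- Let a, b ∈ ℚ, let Q = 1 + 2a·x + b·x² ∈ ℚ[[x]], and define F = -x·Q⁻¹·(c∘(b·x²·Q⁻²)) and G = Q⁻¹·(c∘(b·x²·Q⁻²)) = -F/x, where c is the Catalan generating function (note b·x²·Q⁻² has zero constant term, so the substitution is defined). Then F∘F = x and G·(G∘F) = 1. In particular the Riordan arrays (1, F) and (G, F) are Riordan involutions; the latter is the involution defined by the orthogonal polynomial coefficient array (1/(1+ax+bx²), x/(1+ax+bx²)). -/
open PowerSeries Finset

namespace Aux17

variable {R : Type*} [CommRing R]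

theorem coeff_comp (f h : PowerSeries R) (n : ℕ) :
    coeff n (f.comp h) = ∑ k ∈ range (n + 1), coeff k f * coeff n (h ^ k) := by
  simp [PowerSeries.comp]

theorem coeff_pow_eq_zero {h : PowerSeries R} (h0 : constantCoeff h = 0)
    {n k : ℕ} (hnk : n < k) : coeff n (h ^ k) = 0 := by
  have hdvd : (X : PowerSeries R) ^ k ∣ h ^ k :=
    pow_dvd_pow_of_dvd (PowerSeries.X_dvd_iff.mpr h0) k
  exact (PowerSeries.X_pow_dvd_iff.mp hdvd) n hnk

theorem coeff_eval₂ {h : PowerSeries R} (h0 : constantCoeff h = 0)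
    (p : Polynomial R) (n : ℕ) :
    coeff n (p.eval₂ C h) = ∑ k ∈ range (n + 1), p.coeff k * coeff n (h ^ k) := by
  set M := max (p.natDegree + 1) (n + 1) with hM
  rw [Polynomial.eval₂_eq_sum_range' C (lt_of_lt_of_le (Nat.lt_succ_self _)
    (le_max_left _ _)) h, map_sum]
  have h1 : ∑ i ∈ range M, coeff n (C (p.coeff i) * h ^ i)
      = ∑ i ∈ range M, p.coeff i * coeff n (h ^ i) := by
    refine Finset.sum_congr rfl fun i _ => ?_
    rw [coeff_C_mul]
  rw [h1]
  symm
  refine Finset.sum_subset (Finset.range_subset_range.mpr (le_max_right _ _)) ?_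
  intro k _ hk
  rw [Finset.mem_range, not_lt] at hk
  rw [coeff_pow_eq_zero h0 (Nat.lt_of_succ_le hk), mul_zero]


theorem coeff_comp_eq_eval₂ {h : PowerSeries R} (h0 : constantCoeff h = 0)
    (f : PowerSeries R) {n N : ℕ} (hn : n < N) :
    coeff n (f.comp h) = coeff n ((trunc N f).eval₂ C h) := by
  rw [coeff_eval₂ h0, coeff_comp]
  refine Finset.sum_congr rfl fun k hk => ?_
  rw [Finset.mem_range] at hk
  rw [coeff_trunc, if_pos (lt_of_lt_of_le hk hn)]

theorem comp_add (f g h : PowerSeries R) :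
    (f + g).comp h = f.comp h + g.comp h := by
  ext n
  simp [coeff_comp, add_mul, Finset.sum_add_distrib]

theorem comp_neg (f h : PowerSeries R) : (-f).comp h = -(f.comp h) := by
  ext n
  simp [coeff_comp, Finset.sum_neg_distrib]

theorem comp_C (r : R) (h : PowerSeries R) : (C r).comp h = C r := by
  ext n
  rw [coeff_comp]
  simp only [PowerSeries.coeff_C, ite_mul, zero_mul, Finset.sum_ite_eq',
    Finset.mem_range, Nat.succ_pos, if_pos, pow_zero, PowerSeries.coeff_one]
  split <;> simp

theorem comp_one (h : PowerSeries R) : (1 : PowerSeries R).comp h = 1 := by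
  have := comp_C (1 : R) h
  simpa using this

theorem comp_zero' (h : PowerSeries R) : (0 : PowerSeries R).comp h = 0 := by
  ext n; simp [coeff_comp]

theorem comp_X {h : PowerSeries R} (h0 : constantCoeff h = 0) :
    (X : PowerSeries R).comp h = h := by
  ext n
  rw [coeff_comp]
  cases n with
  | zero => simpa [PowerSeries.coeff_X] using h0.symm
  | succ m =>
    rw [Finset.sum_eq_single 1]
    · simp [PowerSeries.coeff_X]
    · intro k _ hk
      simp [PowerSeries.coeff_X, hk]
    · intro hmem
      exact absurd (Finset.mem_range.mpr (by omega)) hmem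

theorem comp_mul {h : PowerSeries R} (h0 : constantCoeff h = 0)
    (f g : PowerSeries R) : (f * g).comp h = f.comp h * g.comp h := by
  ext n
  rw [PowerSeries.coeff_mul]
  have hstep : ∀ p ∈ Finset.HasAntidiagonal.antidiagonal n,
      coeff p.1 (f.comp h) * coeff p.2 (g.comp h)
      = coeff p.1 ((trunc (n+1) f).eval₂ C h)
        * coeff p.2 ((trunc (n+1) g).eval₂ C h) := by
    intro p hp
    rw [Finset.HasAntidiagonal.mem_antidiagonal] at hp
    rw [coeff_comp_eq_eval₂ h0 f (N := n+1) (by omega), coeff_comp_eq_eval₂ h0 g (N := n+1) (by omega)]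
  rw [Finset.sum_congr rfl hstep, ← PowerSeries.coeff_mul, ← Polynomial.eval₂_mul,
    coeff_eval₂ h0, coeff_comp]
  refine Finset.sum_congr rfl fun k hk => ?_
  rw [Finset.mem_range] at hk
  congr 1
  rw [Polynomial.coeff_mul, PowerSeries.coeff_mul]
  refine Finset.sum_congr rfl fun p hp => ?_
  rw [Finset.HasAntidiagonal.mem_antidiagonal] at hp
  rw [coeff_trunc, coeff_trunc, if_pos (by omega), if_pos (by omega)]

theorem comp_pow {h : PowerSeries R} (h0 : constantCoeff h = 0)
    (f : PowerSeries R) (k : ℕ) : (f ^ k).comp h = (f.comp h) ^ k := by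
  induction k with
  | zero => simpa using comp_one h
  | succ m ih => rw [pow_succ, comp_mul h0, ih, pow_succ]

theorem constantCoeff_comp (f h : PowerSeries R) :
    constantCoeff (f.comp h) = constantCoeff f := by
  have : coeff 0 (f.comp h) = coeff 0 f := by
    rw [coeff_comp]; simp
  simpa using this

end Aux17
/-- With `Q = 1 + 2ax + bx²`, `F = -x·Q⁻¹·c(bx²/Q²)` and `G = Q⁻¹·c(bx²/Q²)`,
the pairs `(1, F)` and `(G, F)` are Riordan involutions; `(G, F)` is the
involution defined by the orthogonal polynomial coefficient array
`(1/(1+ax+bx²), x/(1+ax+bx²))`. -/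
theorem stmt17 (a b : ℚ) (c : PowerSeries ℚ)
    (hc0 : PowerSeries.constantCoeff c = 1)
    (hc : c = 1 + PowerSeries.X * c ^ 2)
    (Q F G : PowerSeries ℚ)
    (hQ : Q = 1 + PowerSeries.C (2 * a) * PowerSeries.X +
      PowerSeries.C b * PowerSeries.X ^ 2)
    (hF : F = -(PowerSeries.X * Q⁻¹ *
      PowerSeries.comp c (PowerSeries.C b * PowerSeries.X ^ 2 * (Q⁻¹) ^ 2)))
    (hG : G = Q⁻¹ *
      PowerSeries.comp c (PowerSeries.C b * PowerSeries.X ^ 2 * (Q⁻¹) ^ 2)) :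
    PowerSeries.comp F F = PowerSeries.X ∧ G * PowerSeries.comp G F = 1 := by
  open Aux17 in
  set u : PowerSeries ℚ := PowerSeries.C b * PowerSeries.X ^ 2 * (Q⁻¹) ^ 2 with hu
  set g : PowerSeries ℚ := PowerSeries.comp c u with hgdef
  have hu0 : constantCoeff u = 0 := by
    simp [hu]
  have hQ0 : constantCoeff Q = 1 := by simp [hQ]
  have hQinv : Q * Q⁻¹ = 1 := PowerSeries.mul_inv_cancel Q (by rw [hQ0]; norm_num)
  -- g satisfies g = 1 + u g²
  have hg : g = 1 + u * g ^ 2 := by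
    conv_lhs => rw [hgdef, hc]
    rw [Aux17.comp_add, Aux17.comp_one, Aux17.comp_mul hu0, Aux17.comp_X hu0,
      Aux17.comp_pow hu0]
  have hF0 : constantCoeff F = 0 := by simp [hF]
  -- key algebraic equation for F
  have hQF : Q * F = -(PowerSeries.X * g) := by
    have h1 : Q * F = -(Q * Q⁻¹ * (PowerSeries.X * g)) := by rw [hF]; ring
    rw [hQinv, one_mul] at h1
    exact h1
  have hgF : g = 1 + PowerSeries.C b * F ^ 2 := by
    have h2 : PowerSeries.C b * F ^ 2 = u * g ^ 2 := by rw [hF, hu]; ring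
    rw [h2]; exact hg
  have hkey : PowerSeries.X + F + PowerSeries.C (2 * a) * (PowerSeries.X * F)
      + PowerSeries.C b * ((PowerSeries.X * F) * (PowerSeries.X + F)) = 0 := by
    have h3 : Q * F + PowerSeries.X * g = 0 := by rw [hQF]; ring
    rw [hQ, hgF] at h3
    linear_combination h3
  -- compose the key equation with F
  set Y : PowerSeries ℚ := PowerSeries.comp F F with hY
  have hY0 : constantCoeff Y = 0 := by
    rw [hY, Aux17.constantCoeff_comp, hF0]
  have heq : F + Y + PowerSeries.C (2 * a) * (F * Y)
      + PowerSeries.C b * ((F * Y) * (F + Y)) = 0 := by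
    have h4 := congrArg (fun p => PowerSeries.comp p F) hkey
    simpa [Aux17.comp_add, Aux17.comp_mul hF0, Aux17.comp_X hF0, Aux17.comp_C,
      Aux17.comp_zero'] using h4
  have hfac : (Y - PowerSeries.X) * (1 + PowerSeries.C (2 * a) * F
      + PowerSeries.C b * (F * (F + PowerSeries.X + Y))) = 0 := by
    linear_combination heq - hkey
  have hWne : (1 + PowerSeries.C (2 * a) * F
      + PowerSeries.C b * (F * (F + PowerSeries.X + Y))) ≠ 0 := by
    intro h5
    have h6 := congrArg (constantCoeff) h5
    simp [hF0, hY0] at h6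
  have hYX : Y = PowerSeries.X := by
    rcases mul_eq_zero.mp hfac with h7 | h7
    · exact sub_eq_zero.mp h7
    · exact absurd h7 hWne
  refine ⟨hYX, ?_⟩
  -- second part
  have hFG : F = -(PowerSeries.X * G) := by rw [hF, hG]; ring
  have h8 := congrArg (fun p => PowerSeries.comp p F) hFG
  simp only [Aux17.comp_neg, Aux17.comp_mul hF0, Aux17.comp_X hF0] at h8
  rw [← hY, hYX] at h8
  -- h8 : X = -(F * comp G F)
  have h9 : PowerSeries.X * (G * PowerSeries.comp G F - 1) = 0 := by
    linear_combination (-1) * h8 + (PowerSeries.comp G F) * hFG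
  rcases mul_eq_zero.mp h9 with h10 | h10
  · exact absurd h10 PowerSeries.X_ne_zero
  · linear_combination h10
end

section
/- Let C = c∘(x²) ∈ ℚ[[x]] be the Catalan generating function evaluated at x² (so C = 1 + x²·C²). Then: (i) in (ℚ[y])[[x]] one has the identity C·(1 + y·x - (1-y)·x²·C) = 1 + y·((1+x)·C - 1), identifying the generating function of the moments of the generalized Chebyshev polynomials of the first kind with the bivariate generating function of the Riordan array (c(x²), (1+x)c(x²)-1); (ii) for μ_n ∈ ℚ[y] the coefficient of xⁿ in (1 + y·x - (1-y)·x²·C)⁻¹, the Hankel transform satisfies det(μ_{i+j})_{0≤i,j≤n} = (1-y)ⁿ in ℚ[y]. -/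
open PowerSeries Finset

/-- even-embedding `f(x) ↦ f(x²)` -/
noncomputable def emb {R : Type*} [CommSemiring R] (f : PowerSeries R) : PowerSeries R :=
  PowerSeries.mk fun n => if Even n then PowerSeries.coeff (n / 2) f else 0

lemma coeff_emb {R : Type*} [CommSemiring R] (f : PowerSeries R) (n : ℕ) :
    PowerSeries.coeff n (emb f) = if Even n then PowerSeries.coeff (n / 2) f else 0 :=
  coeff_mk _ _

lemma emb_one {R : Type*} [CommSemiring R] : emb (1 : PowerSeries R) = 1 := by
  ext n
  rw [coeff_emb]
  rcases n with _ | m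
  · simp
  · rw [coeff_one, coeff_one, if_neg (Nat.succ_ne_zero m)]
    split
    · rename_i h
      obtain ⟨t, ht⟩ := h
      rw [if_neg (by omega)]
    · rfl

lemma emb_add {R : Type*} [CommSemiring R] (f g : PowerSeries R) :
    emb (f + g) = emb f + emb g := by
  ext n
  simp only [map_add, coeff_emb]
  split <;> simp

lemma emb_X {R : Type*} [CommSemiring R] : emb (PowerSeries.X : PowerSeries R) = X ^ 2 := by
  ext n
  rw [coeff_emb, coeff_X_pow]
  rcases Nat.even_or_odd n with ⟨m, rfl⟩ | ho
  · rw [if_pos ⟨m, rfl⟩, coeff_X]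
    by_cases hm : m = 1
    · subst hm; norm_num
    · rw [if_neg (by omega), if_neg (by omega)]
  · rw [if_neg (Nat.not_even_iff_odd.mpr ho),
      if_neg (by obtain ⟨t, ht⟩ := ho; omega)]

lemma emb_mul {R : Type*} [CommSemiring R] (f g : PowerSeries R) :
    emb (f * g) = emb f * emb g := by
  ext n
  rw [coeff_emb]
  rcases Nat.even_or_odd n with ⟨m, rfl⟩ | ho
  · rw [if_pos ⟨m, rfl⟩]
    have hdiv : (m + m) / 2 = m := by omega
    rw [hdiv, PowerSeries.coeff_mul, PowerSeries.coeff_mul]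
    have hmap : ((Finset.HasAntidiagonal.antidiagonal m).map
        ⟨fun q => (2 * q.1, 2 * q.2), @id (Function.Injective fun q : ℕ × ℕ => (2 * q.1, 2 * q.2))
          (by intro a b h; simpa [Prod.ext_iff] using h)⟩)
        ⊆ Finset.HasAntidiagonal.antidiagonal (m + m) := by
      intro p hp
      simp only [Finset.mem_map, Function.Embedding.coeFn_mk, Finset.HasAntidiagonal.mem_antidiagonal] at hp ⊢
      obtain ⟨q, hq, rfl⟩ := hp
      omega
    rw [← Finset.sum_subset hmap ?side, Finset.sum_map]
    · apply Finset.sum_congr rfl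
      intro q _
      simp only [Function.Embedding.coeFn_mk, coeff_emb]
      rw [if_pos ⟨q.1, by ring⟩, if_pos ⟨q.2, by ring⟩]
      have e1 : 2 * q.1 / 2 = q.1 := by omega
      have e2 : 2 * q.2 / 2 = q.2 := by omega
      rw [e1, e2]
    case side =>
      intro p hp hns
      rw [coeff_emb, coeff_emb]
      by_cases h1 : Even p.1
      · by_cases h2 : Even p.2
        · exfalso
          apply hns
          simp only [Finset.mem_map, Function.Embedding.coeFn_mk, Finset.HasAntidiagonal.mem_antidiagonal]
          obtain ⟨a, ha⟩ := h1; obtain ⟨b, hb⟩ := h2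
          simp only [Finset.HasAntidiagonal.mem_antidiagonal] at hp
          exact ⟨(a, b), by omega, by simp [Prod.ext_iff]; omega⟩
        · rw [if_neg h2, mul_zero]
      · rw [if_neg h1, zero_mul]
  · rw [if_neg (Nat.not_even_iff_odd.mpr ho), PowerSeries.coeff_mul]
    refine (Finset.sum_eq_zero ?_).symm
    intro p hp
    simp only [Finset.HasAntidiagonal.mem_antidiagonal] at hp
    rw [coeff_emb, coeff_emb]
    by_cases h1 : Even p.1
    · by_cases h2 : Even p.2
      · exfalso
        obtain ⟨a, ha⟩ := h1; obtain ⟨b, hb⟩ := h2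
        obtain ⟨t, ht⟩ := ho
        omega
      · rw [if_neg h2, mul_zero]
    · rw [if_neg h1, zero_mul]

lemma comp_X_sq {R : Type*} [CommSemiring R] (f : PowerSeries R) :
    PowerSeries.comp f (PowerSeries.X ^ 2) = emb f := by
  ext n
  rw [PowerSeries.comp, coeff_mk, coeff_emb]
  have hxp : ∀ k : ℕ, ((PowerSeries.X : PowerSeries R) ^ 2) ^ k = X ^ (2 * k) := fun k => by
    rw [← pow_mul]
  rcases Nat.even_or_odd n with ⟨m, rfl⟩ | ho
  · rw [if_pos ⟨m, rfl⟩]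
    have hdiv : (m + m) / 2 = m := by omega
    rw [hdiv]
    rw [Finset.sum_eq_single m]
    · rw [hxp, coeff_X_pow, if_pos (by omega), mul_one]
    · intro k _ hk
      rw [hxp, coeff_X_pow, if_neg (by omega), mul_zero]
    · intro h
      exact absurd (Finset.mem_range.2 (by omega)) h
  · rw [if_neg (Nat.not_even_iff_odd.mpr ho)]
    apply Finset.sum_eq_zero
    intro k _
    rw [hxp, coeff_X_pow, if_neg (by obtain ⟨t, ht⟩ := ho; omega), mul_zero]

/-- Stieltjes–Aigner table for the J-fraction with b₀ = -y, bₖ = 0 (k ≥ 1),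
λ₁ = 1 - y, λₖ = 1 (k ≥ 2). -/
noncomputable def aa : ℕ → ℕ → Polynomial ℚ
  | 0, 0 => 1
  | 0, _ + 1 => 0
  | n + 1, 0 => -Polynomial.X * aa n 0 + (1 - Polynomial.X) * aa n 1
  | n + 1, k + 1 => aa n k + aa n (k + 2)

noncomputable def dd : ℕ → Polynomial ℚ :=
  fun k => if k = 0 then 1 else 1 - Polynomial.X

lemma aa_tri : ∀ n k : ℕ, n < k → aa n k = 0 := by
  intro n
  induction n with
  | zero => intro k hk; match k, hk with | k + 1, _ => rfl
  | succ n ih =>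
    intro k hk
    match k, hk with
    | k + 1, hk =>
      show aa n k + aa n (k + 2) = 0
      rw [ih k (by omega), ih (k + 2) (by omega), add_zero]

lemma aa_diag : ∀ n : ℕ, aa n n = 1 := by
  intro n
  induction n with
  | zero => rfl
  | succ n ih =>
    show aa n n + aa n (n + 2) = 1
    rw [ih, aa_tri n (n + 2) (by omega), add_zero]

/-- The Hankel-sum. -/
noncomputable def FF (i j : ℕ) : Polynomial ℚ :=
  ∑ k ∈ Finset.range (i + 1), aa i k * dd k * aa j k

lemma FF_ext (i j m : ℕ) (hm : i + 1 ≤ m) :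
    ∑ k ∈ Finset.range m, aa i k * dd k * aa j k = FF i j := by
  rw [FF, Finset.sum_subset (Finset.range_subset_range.2 hm)]
  intro k _ hk
  rw [aa_tri i k (by simp only [Finset.mem_range, not_lt] at hk; omega), zero_mul, zero_mul]

lemma FF_symm (i j : ℕ) : FF i j = FF j i := by
  rw [← FF_ext i j (i + j + 1) (by omega), ← FF_ext j i (i + j + 1) (by omega)]
  apply Finset.sum_congr rfl
  intro k _
  ring

lemma FF_exchange (i j : ℕ) : FF (i + 1) j = FF i (j + 1) := by
  have key : ∀ p q : ℕ, FF (p + 1) q =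
      -Polynomial.X * aa p 0 * aa q 0 + (1 - Polynomial.X) *
        ((∑ k ∈ Finset.range (p + q + 2), aa p k * aa q (k + 1)) +
         (∑ k ∈ Finset.range (p + q + 2), aa p (k + 1) * aa q k)) := by
    intro p q
    have h0 : aa (p + 1) 0 * dd 0 * aa q 0 =
        -Polynomial.X * aa p 0 * aa q 0 + (1 - Polynomial.X) * (aa p 1 * aa q 0) := by
      show (-Polynomial.X * aa p 0 + (1 - Polynomial.X) * aa p 1) * dd 0 * aa q 0 = _
      rw [dd]; norm_num; ring
    have h1 : ∀ k ∈ Finset.range (p + q + 2),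
        aa (p + 1) (k + 1) * dd (k + 1) * aa q (k + 1) =
        (1 - Polynomial.X) * (aa p k * aa q (k + 1)) +
        (1 - Polynomial.X) * (aa p (k + 2) * aa q (k + 1)) := by
      intro k _
      show (aa p k + aa p (k + 2)) * dd (k + 1) * aa q (k + 1) = _
      rw [dd]; norm_num; ring
    have h3 : ∑ k ∈ Finset.range (p + q + 3), aa p (k + 1) * aa q k
        = (∑ k ∈ Finset.range (p + q + 2), aa p (k + 2) * aa q (k + 1)) + aa p 1 * aa q 0 :=
      Finset.sum_range_succ' _ _
    have h4 : ∑ k ∈ Finset.range (p + q + 3), aa p (k + 1) * aa q k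
        = (∑ k ∈ Finset.range (p + q + 2), aa p (k + 1) * aa q k)
          + aa p (p + q + 3) * aa q (p + q + 2) :=
      Finset.sum_range_succ _ _
    rw [aa_tri p (p + q + 3) (by omega), zero_mul, add_zero] at h4
    have hTS : (∑ k ∈ Finset.range (p + q + 2), aa p (k + 2) * aa q (k + 1)) + aa p 1 * aa q 0
        = ∑ k ∈ Finset.range (p + q + 2), aa p (k + 1) * aa q k := by
      linear_combination h4 - h3
    rw [← FF_ext (p + 1) q (p + q + 3) (by omega), Finset.sum_range_succ',
      Finset.sum_congr rfl h1, Finset.sum_add_distrib, ← Finset.mul_sum, ← Finset.mul_sum, h0]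
    linear_combination (1 - Polynomial.X) * hTS
  rw [key i j, FF_symm i (j + 1), key j i, Nat.add_comm j i]
  have c1 : (∑ k ∈ Finset.range (i + j + 2), aa j k * aa i (k + 1))
      = ∑ k ∈ Finset.range (i + j + 2), aa i (k + 1) * aa j k :=
    Finset.sum_congr rfl fun k _ => mul_comm _ _
  have c2 : (∑ k ∈ Finset.range (i + j + 2), aa j (k + 1) * aa i k)
      = ∑ k ∈ Finset.range (i + j + 2), aa i k * aa j (k + 1) :=
    Finset.sum_congr rfl fun k _ => mul_comm _ _
  rw [c1, c2]
  ring

lemma FF_eq_mu : ∀ j i : ℕ, FF i j = aa (i + j) 0 := by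
  intro j
  induction j with
  | zero =>
    intro i
    rw [FF, Finset.sum_eq_single 0]
    · show aa i 0 * dd 0 * aa 0 0 = aa (i + 0) 0
      rw [dd, aa_diag 0]; norm_num
    · intro k _ hk
      match k, hk with
      | k + 1, _ =>
        show aa i (k+1) * dd (k+1) * aa 0 (k+1) = 0
        rw [show aa 0 (k+1) = 0 from rfl, mul_zero]
    · intro h; exact absurd (Finset.mem_range.2 (by omega)) h
  | succ j ih =>
    intro i
    rw [← FF_exchange i j, ih (i + 1), show i + 1 + j = i + (j + 1) from by omega]


/-- generating function of column `k` -/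
noncomputable def AA (k : ℕ) : PowerSeries (Polynomial ℚ) :=
  PowerSeries.mk fun n => aa n k

lemma coeff_AA (k n : ℕ) : PowerSeries.coeff n (AA k) = aa n k := coeff_mk _ _

lemma agree_mul {R : Type*} [CommRing R] (h f g : PowerSeries R) (n : ℕ)
    (hfg : ∀ m ≤ n, PowerSeries.coeff m f = PowerSeries.coeff m g) :
    PowerSeries.coeff n (h * f) = PowerSeries.coeff n (h * g) := by
  rw [PowerSeries.coeff_mul, PowerSeries.coeff_mul]
  apply Finset.sum_congr rfl
  intro p hp
  rw [hfg p.2 (Finset.HasAntidiagonal.antidiagonal.snd_le hp)]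

lemma AA_succ_coeff (D : PowerSeries (Polynomial ℚ)) (hD2 : D = 1 + X ^ 2 * D ^ 2) :
    ∀ n k : ℕ, aa n (k + 1) = PowerSeries.coeff n (X * D * AA k) := by
  intro n
  induction n using Nat.strong_induction_on with
  | _ n ih =>
    intro k
    match n with
    | 0 =>
      show (0 : Polynomial ℚ) = _
      rw [mul_assoc, coeff_zero_eq_constantCoeff, map_mul, constantCoeff_X, zero_mul]
    | n + 1 =>
      show aa n k + aa n (k + 2) = _
      have e1 : aa n (k + 2) = PowerSeries.coeff n (X * D * AA (k + 1)) :=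
        ih n (by omega) (k + 1)
      have e2 : PowerSeries.coeff n (X * D * AA (k + 1)) =
          PowerSeries.coeff n (X * D * (X * D * AA k)) := by
        apply agree_mul
        intro m hm
        rw [coeff_AA]
        exact ih m (by omega) k
      have e3 : PowerSeries.coeff n (X * D * (X * D * AA k)) =
          PowerSeries.coeff n ((D - 1) * AA k) := by
        have hr : X * D * (X * D * AA k) = (X ^ 2 * D ^ 2) * AA k := by ring
        have hd : (X : PowerSeries (Polynomial ℚ)) ^ 2 * D ^ 2 = D - 1 := by
          linear_combination -hD2
        rw [hr, hd]
      have e4 : PowerSeries.coeff (n + 1) (X * D * AA k) =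
          PowerSeries.coeff n (D * AA k) := by
        rw [mul_assoc, coeff_succ_X_mul]
      have e5 : PowerSeries.coeff n (D * AA k) =
          PowerSeries.coeff n (AA k) + PowerSeries.coeff n ((D - 1) * AA k) := by
        have : D * AA k = AA k + (D - 1) * AA k := by ring
        rw [this, map_add]
      rw [e4, e5, coeff_AA, e1, e2, e3]

lemma AA_succ (D : PowerSeries (Polynomial ℚ)) (hD2 : D = 1 + X ^ 2 * D ^ 2) (k : ℕ) :
    AA (k + 1) = X * D * AA k := by
  refine PowerSeries.ext fun n => ?_
  rw [coeff_AA, AA_succ_coeff D hD2 n k]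

lemma AA_zero_eq : AA 0 = 1 + X * (-(PowerSeries.C (R := Polynomial ℚ) Polynomial.X) * AA 0 +
    (1 - PowerSeries.C (R := Polynomial ℚ) Polynomial.X) * AA 1) := by
  refine PowerSeries.ext fun n => ?_
  rcases n with _ | n
  · rw [coeff_AA]
    show (1 : Polynomial ℚ) = _
    simp
  · rw [coeff_AA, map_add, coeff_one, if_neg (Nat.succ_ne_zero n), zero_add,
      coeff_succ_X_mul, map_add, neg_mul, map_neg, coeff_C_mul, sub_mul, one_mul, map_sub,
      coeff_C_mul, coeff_AA, coeff_AA]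
    show -Polynomial.X * aa n 0 + (1 - Polynomial.X) * aa n 1 = _
    ring

lemma den_AA0 (D : PowerSeries (Polynomial ℚ)) (hD2 : D = 1 + X ^ 2 * D ^ 2) :
    (1 + PowerSeries.C (R := Polynomial ℚ) Polynomial.X * X -
      (1 - PowerSeries.C (R := Polynomial ℚ) Polynomial.X) * X ^ 2 * D) * AA 0 = 1 := by
  have h1 := AA_zero_eq
  have h2 : AA 1 = X * D * AA 0 := AA_succ D hD2 0
  linear_combination h1 + (1 - PowerSeries.C (R := Polynomial ℚ) Polynomial.X) * X * h2

/-- Let `C = c∘(x²)` where `c` is the Catalan generating function. Then (i) in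
`(ℚ[y])[[x]]` one has `C·(1 + yx - (1-y)x²C) = 1 + y((1+x)C - 1)`, and (ii) the
moments `μ_n = [xⁿ](1 + yx - (1-y)x²C)⁻¹` have Hankel transform `(1-y)ⁿ`. -/
theorem stmt19 (c : PowerSeries ℚ)
    (hc0 : PowerSeries.constantCoeff c = 1)
    (hc : c = 1 + PowerSeries.X * c ^ 2)
    (D : PowerSeries (Polynomial ℚ))
    (hD : D = PowerSeries.map (algebraMap ℚ (Polynomial ℚ))
      (PowerSeries.comp c (PowerSeries.X ^ 2))) :
    D * (1 + PowerSeries.C (R := Polynomial ℚ) Polynomial.X * PowerSeries.X -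
          (1 - PowerSeries.C (R := Polynomial ℚ) Polynomial.X) * PowerSeries.X ^ 2 * D) =
        1 + PowerSeries.C (R := Polynomial ℚ) Polynomial.X * ((1 + PowerSeries.X) * D - 1) ∧
      (∀ u : PowerSeries (Polynomial ℚ),
        (1 + PowerSeries.C (R := Polynomial ℚ) Polynomial.X * PowerSeries.X -
          (1 - PowerSeries.C (R := Polynomial ℚ) Polynomial.X) * PowerSeries.X ^ 2 * D) * u = 1 →
        ∀ μ : ℕ → Polynomial ℚ,
          (∀ n : ℕ, μ n = PowerSeries.coeff (R := Polynomial ℚ) n u) →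
          ∀ n : ℕ,
            (Matrix.of fun i j : Fin (n + 1) => μ ((i : ℕ) + (j : ℕ))).det =
              (1 - Polynomial.X : Polynomial ℚ) ^ n) := by
  have hE : emb c = 1 + X ^ 2 * (emb c) ^ 2 := by
    calc emb c = emb (1 + X * c ^ 2) := by rw [← hc]
      _ = 1 + X ^ 2 * (emb c) ^ 2 := by
          rw [emb_add, emb_one, emb_mul, emb_X, sq c, emb_mul, ← sq]
  have hD2 : D = 1 + X ^ 2 * D ^ 2 := by
    rw [hD, comp_X_sq]
    conv_lhs => rw [hE]
    rw [map_add, map_one, map_mul, map_pow, map_pow, PowerSeries.map_X]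
  constructor
  · linear_combination (1 - PowerSeries.C (R := Polynomial ℚ) Polynomial.X) * hD2
  · intro u hu μ hμ n
    have hden := den_AA0 D hD2
    have hu' : u = AA 0 := by linear_combination AA 0 * hu - u * hden
    have hμ' : ∀ m : ℕ, μ m = aa m 0 := fun m => by rw [hμ m, hu', coeff_AA]
    have hmat : (Matrix.of fun i j : Fin (n + 1) => μ ((i : ℕ) + (j : ℕ))) =
        (Matrix.of fun i k : Fin (n + 1) => aa (i : ℕ) (k : ℕ)) *
          Matrix.diagonal (fun k : Fin (n + 1) => dd (k : ℕ)) *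
          (Matrix.of fun i k : Fin (n + 1) => aa (i : ℕ) (k : ℕ)).transpose := by
      ext i j
      rw [Matrix.of_apply, Matrix.mul_apply]
      have hterm : ∀ k : Fin (n + 1),
          ((Matrix.of fun i k : Fin (n + 1) => aa (i : ℕ) (k : ℕ)) *
            Matrix.diagonal (fun k : Fin (n + 1) => dd (k : ℕ))) i k *
            (Matrix.of fun i k : Fin (n + 1) => aa (i : ℕ) (k : ℕ)).transpose k j =
          aa (i : ℕ) (k : ℕ) * dd (k : ℕ) * aa (j : ℕ) (k : ℕ) := by
        intro k
        rw [Matrix.mul_diagonal, Matrix.transpose_apply, Matrix.of_apply, Matrix.of_apply]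
      rw [Finset.sum_congr rfl fun k _ => hterm k]
      have hsum : ∑ k : Fin (n + 1), aa (i : ℕ) (k : ℕ) * dd (k : ℕ) * aa (j : ℕ) (k : ℕ) =
          ∑ k ∈ Finset.range (n + 1), aa (i : ℕ) k * dd k * aa (j : ℕ) k :=
        Fin.sum_univ_eq_sum_range (fun k => aa (i : ℕ) k * dd k * aa (j : ℕ) k) (n + 1)
      rw [hsum, FF_ext (i : ℕ) (j : ℕ) (n + 1) (by omega), FF_eq_mu (j : ℕ) (i : ℕ), hμ']
    rw [hmat, Matrix.det_mul, Matrix.det_mul, Matrix.det_transpose]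
    have hdetL : (Matrix.of fun i k : Fin (n + 1) => aa (i : ℕ) (k : ℕ)).det = 1 := by
      have hlt : (Matrix.of fun i k : Fin (n + 1) => aa (i : ℕ) (k : ℕ)).BlockTriangular
          OrderDual.toDual := by
        intro i j hij
        exact aa_tri (i : ℕ) (j : ℕ) hij
      rw [Matrix.det_of_lowerTriangular _ hlt]
      have hone : ∀ i ∈ Finset.univ, (Matrix.of fun i k : Fin (n + 1) =>
          aa (i : ℕ) (k : ℕ)) i i = 1 := by
        intro i _
        rw [Matrix.of_apply, aa_diag]
      rw [Finset.prod_congr rfl hone]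
      exact Finset.prod_const_one
    have hdetD : (Matrix.diagonal fun k : Fin (n + 1) => dd (k : ℕ)).det =
        (1 - Polynomial.X : Polynomial ℚ) ^ n := by
      rw [Matrix.det_diagonal, Fin.prod_univ_succ]
      have h0 : dd ((0 : Fin (n + 1)) : ℕ) = 1 := by rw [Fin.val_zero, dd, if_pos rfl]
      have hs : ∀ i : Fin n, dd ((Fin.succ i : Fin (n + 1)) : ℕ) =
          (1 - Polynomial.X : Polynomial ℚ) := by
        intro i
        rw [Fin.val_succ, dd, if_neg (Nat.succ_ne_zero _)]
      rw [h0, one_mul, Finset.prod_congr rfl fun i _ => hs i, Finset.prod_const,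
        Finset.card_univ, Fintype.card_fin]
    rw [hdetL, hdetD, one_mul, mul_one]
end
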